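/- arXiv:math/0609815 — 4 statements merged into one kernel-verified Lean document; each statement's English description precedes it below -/
import Mathlib

section
/- There is an absolute constant C such that for every integer n ≥ 1 and every choice of real coefficients α(R), one for each dyadic rectangle R ⊂ [0,1]^2 with |R| ≥ 2^{-n}, one has 2^{-n} · Σ_{|R| = 2^{-n}} |α(R)| ≤ C · ‖ Σ_{|R| ≥ 2^{-n}} α(R) h_R ‖_{L^∞([0,1]^2)}, where both sums range over dyadic rectangles R ⊂ [0,1]^2 of the indicated volume. -/
open MeasureTheory
open scoped ENNReal Classical

/-- The `L^∞`-normalized Haar function of the dyadic interval `[j/2^k, (j+1)/2^k)`: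
it is `-1` on the left half, `+1` on the right half, and `0` outside. -/
noncomputable def haar1 (k j : ℕ) (x : ℝ) : ℝ :=
  if (j : ℝ) / 2 ^ k ≤ x ∧ x < ((j : ℝ) + 1 / 2) / 2 ^ k then -1
  else if ((j : ℝ) + 1 / 2) / 2 ^ k ≤ x ∧ x < ((j : ℝ) + 1) / 2 ^ k then 1
  else 0

/-- A dyadic rectangle in `[0,1]^d` is encoded by its levels `R.1` and positions `R.2`;
its `i`-th side interval is `[R.2 i / 2 ^ R.1 i, (R.2 i + 1) / 2 ^ R.1 i)`.
`haarR R` is the associated (tensor product) Haar function. -/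
noncomputable def haarR {d : ℕ} (R : (Fin d → ℕ) × (Fin d → ℕ)) (x : Fin d → ℝ) : ℝ :=
  ∏ i, haar1 (R.1 i) (R.2 i) (x i)

/-- The dyadic rectangles in `[0,1]^d` of volume exactly `2 ^ (-n)`. -/
def rectsEq (d n : ℕ) : Finset ((Fin d → ℕ) × (Fin d → ℕ)) :=
  ((Fintype.piFinset fun _ => Finset.range (n + 1)) ×ˢ
      (Fintype.piFinset fun _ => Finset.range (2 ^ n))).filter
    fun R => (∑ i, R.1 i) = n ∧ ∀ i, R.2 i < 2 ^ R.1 i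

/-- The dyadic rectangles in `[0,1]^d` of volume at least `2 ^ (-n)`. -/
def rectsGe (d n : ℕ) : Finset ((Fin d → ℕ) × (Fin d → ℕ)) :=
  ((Fintype.piFinset fun _ => Finset.range (n + 1)) ×ˢ
      (Fintype.piFinset fun _ => Finset.range (2 ^ n))).filter
    fun R => (∑ i, R.1 i) ≤ n ∧ ∀ i, R.2 i < 2 ^ R.1 i

/-- The unit cube `[0,1]^d`. -/
def unitCube (d : ℕ) : Set (Fin d → ℝ) := Set.univ.pi fun _ => Set.Icc 0 1

namespace SB

def inI (k j : ℕ) (x : ℝ) : Prop := (j : ℝ) / 2 ^ k ≤ x ∧ x < ((j : ℝ) + 1) / 2 ^ k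

noncomputable def sq1 (k j : ℕ) (x : ℝ) : ℝ := if inI k j x then 1 else 0

lemma mid_lt (k j : ℕ) : ((j:ℝ)) / 2^k ≤ ((j : ℝ) + 1 / 2) / 2 ^ k ∧
    ((j : ℝ) + 1 / 2) / 2 ^ k ≤ ((j:ℝ)+1) / 2^k := by
  constructor <;> apply div_le_div_of_nonneg_right _ (by positivity) <;> linarith
  
lemma inI_of_haar1_ne (k j : ℕ) (x : ℝ) (h : haar1 k j x ≠ 0) : inI k j x := by
  unfold haar1 at h
  split_ifs at h with h1 h2
  · exact ⟨h1.1, lt_of_lt_of_le h1.2 (mid_lt k j).2⟩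
  · exact ⟨le_trans (mid_lt k j).1 h2.1, h2.2⟩
  · simp at h

lemma abs_haar1_le (k j : ℕ) (x : ℝ) : |haar1 k j x| ≤ 1 := by
  unfold haar1; split_ifs <;> norm_num

lemma inI_unique (k j j' : ℕ) (x : ℝ) (h : inI k j x) (h' : inI k j' x) : j = j' := by
  have hp : (0:ℝ) < 2^k := by positivity
  rcases h with ⟨h1, h2⟩; rcases h' with ⟨h3, h4⟩
  have a1 : (j:ℝ) < j' + 1 := by
    have := lt_of_le_of_lt h1 h4
    exact lt_of_mul_lt_mul_right (by rw [div_lt_div_iff₀ hp hp] at this; linarith) (le_of_lt hp)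
  have a2 : (j':ℝ) < j + 1 := by
    have := lt_of_le_of_lt h3 h2
    exact lt_of_mul_lt_mul_right (by rw [div_lt_div_iff₀ hp hp] at this; linarith) (le_of_lt hp)
  have : (j:ℕ) < j' + 1 := by exact_mod_cast a1
  have : (j':ℕ) < j + 1 := by exact_mod_cast a2
  omega

lemma haar1_mul_self (k j : ℕ) (x : ℝ) : haar1 k j x * haar1 k j x = sq1 k j x := by
  unfold haar1 sq1 inI
  by_cases h1 : ((j : ℝ)) / 2^k ≤ x ∧ x < ((j : ℝ) + 1 / 2) / 2 ^ k
  · rw [if_pos h1, if_pos ⟨h1.1, lt_of_lt_of_le h1.2 (mid_lt k j).2⟩]; norm_num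
  rw [if_neg h1]
  by_cases h2 : ((j : ℝ) + 1 / 2) / 2 ^ k ≤ x ∧ x < ((j : ℝ) + 1) / 2 ^ k
  · rw [if_pos h2, if_pos ⟨le_trans (mid_lt k j).1 h2.1, h2.2⟩]; norm_num
  rw [if_neg h2]
  have h3 : ¬ ((j : ℝ) / 2 ^ k ≤ x ∧ x < ((j:ℝ)+1) / 2^k) := by
    rintro ⟨ha, hb⟩
    rcases le_or_gt (((j : ℝ) + 1 / 2) / 2 ^ k) x with h | h
    · exact h2 ⟨h, hb⟩
    · exact h1 ⟨ha, h⟩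
  rw [if_neg h3]; norm_num

lemma haar1_mul_ne (k j j' : ℕ) (x : ℝ) (h : j ≠ j') : haar1 k j x * haar1 k j' x = 0 := by
  by_cases h1 : haar1 k j x = 0
  · rw [h1, zero_mul]
  by_cases h2 : haar1 k j' x = 0
  · rw [h2, mul_zero]
  exact absurd (inI_unique k j j' x (inI_of_haar1_ne _ _ _ h1) (inI_of_haar1_ne _ _ _ h2)) h


def ConstOn (φ : ℝ → ℝ) (k j : ℕ) : Prop := ∀ x y, inI k j x → inI k j y → φ x = φ y

noncomputable def μ1 : Measure ℝ := volume.restrict (Set.Icc 0 1)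

lemma constOn_mul {φ ψ : ℝ → ℝ} {k j} (h1 : ConstOn φ k j) (h2 : ConstOn ψ k j) :
    ConstOn (fun x => φ x * ψ x) k j := fun x y hx hy => by
  simp only [h1 x y hx hy, h2 x y hx hy]

lemma constOn_prod {ι : Type*} (T : Finset ι) (f : ι → ℝ → ℝ) {k j}
    (h : ∀ i ∈ T, ConstOn (f i) k j) : ConstOn (fun x => ∏ i ∈ T, f i x) k j := by
  classical
  induction T using Finset.induction_on with
  | empty => intro x y _ _; simp
  | @insert a s hnotmem ih =>
    intro x y hx hy
    simp only [Finset.prod_insert hnotmem]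
    rw [h a (Finset.mem_insert_self a s) x y hx hy,
      show (∏ i ∈ s, f i x) = ∏ i ∈ s, f i y from
        ih (fun i hi => h i (Finset.mem_insert_of_mem hi)) x y hx hy]

-- key: a real of the form M/2^{k'} compares with x ∈ I_{k',j'} as M compares with j'
lemma nat_le_iff {k' j' M : ℕ} {x : ℝ} (hx : inI k' j' x) :
    ((M:ℝ)/2^k' ≤ x ↔ M ≤ j') := by
  have hp : (0:ℝ) < 2^k' := by positivity
  constructor
  · intro h
    have : (M:ℝ)/2^k' < ((j':ℝ)+1)/2^k' := lt_of_le_of_lt h hx.2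
    rw [div_lt_div_iff₀ hp hp] at this
    have : (M:ℝ) < (j':ℝ)+1 := lt_of_mul_lt_mul_right (by linarith) (le_of_lt hp)
    exact_mod_cast Nat.lt_succ_iff.mp (by exact_mod_cast this)
  · intro h
    refine le_trans ?_ hx.1
    gcongr

lemma pow_sub_mul {k k' : ℕ} (h : k ≤ k') : (2:ℝ)^(k'-k) * 2^k = 2^k' := by
  rw [← pow_add]; congr 1; omega

-- boundaries of haar1 k j as M/2^{k'} with k < k'
lemma constOn_haar1 {k k' : ℕ} (j j' : ℕ) (h : k < k') : ConstOn (haar1 k j) k' j' := by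
  intro x y hx hy
  have hk : k + 1 ≤ k' := h
  have e1 : (j:ℝ)/2^k = ((j * 2^(k'-k) : ℕ) : ℝ)/2^k' := by
    push_cast
    rw [div_eq_div_iff (by positivity) (by positivity), mul_comm ((j:ℝ)) _, mul_assoc,
      pow_sub_mul (le_of_lt h), mul_comm]
  have e2 : ((j:ℝ) + 1/2)/2^k = (((2*j+1) * 2^(k'-k-1) : ℕ) : ℝ)/2^k' := by
    push_cast
    rw [div_eq_div_iff (by positivity) (by positivity)]
    have h5 : (2:ℝ)^(k'-k-1) * 2^(k+1) = 2^k' := by rw [← pow_add]; congr 1; omega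
    linear_combination (-((j:ℝ) + 1/2)) * h5
  have e3 : ((j:ℝ) + 1)/2^k = (((j+1) * 2^(k'-k) : ℕ) : ℝ)/2^k' := by
    push_cast
    rw [div_eq_div_iff (by positivity) (by positivity), mul_comm ((j:ℝ)+1) _, mul_assoc,
      pow_sub_mul (le_of_lt h), mul_comm]
  have key : ∀ M : ℕ, ((M:ℝ)/2^k' ≤ x ↔ (M:ℝ)/2^k' ≤ y) ∧ (x < (M:ℝ)/2^k' ↔ y < (M:ℝ)/2^k') := by
    intro M
    constructor
    · rw [nat_le_iff hx, nat_le_iff hy]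
    · rw [← not_le, ← not_le, nat_le_iff hx, nat_le_iff hy]
  have i1 : ((j:ℝ)/2^k ≤ x ∧ x < ((j:ℝ)+1/2)/2^k) ↔ ((j:ℝ)/2^k ≤ y ∧ y < ((j:ℝ)+1/2)/2^k) := by
    rw [e1, e2]; exact and_congr ((key _).1) ((key _).2)
  have i2 : (((j:ℝ)+1/2)/2^k ≤ x ∧ x < ((j:ℝ)+1)/2^k) ↔
      (((j:ℝ)+1/2)/2^k ≤ y ∧ y < ((j:ℝ)+1)/2^k) := by
    rw [e2, e3]; exact and_congr ((key _).1) ((key _).2)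
  unfold haar1
  rw [if_congr i1 rfl (if_congr i2 rfl rfl)]

lemma constOn_sq1 {k k' : ℕ} (j j' : ℕ) (h : k ≤ k') : ConstOn (sq1 k j) k' j' := by
  intro x y hx hy
  have e1 : (j:ℝ)/2^k = ((j * 2^(k'-k) : ℕ) : ℝ)/2^k' := by
    push_cast
    rw [div_eq_div_iff (by positivity) (by positivity), mul_comm ((j:ℝ)) _, mul_assoc,
      pow_sub_mul h, mul_comm]
  have e3 : ((j:ℝ) + 1)/2^k = (((j+1) * 2^(k'-k) : ℕ) : ℝ)/2^k' := by
    push_cast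
    rw [div_eq_div_iff (by positivity) (by positivity), mul_comm ((j:ℝ)+1) _, mul_assoc,
      pow_sub_mul h, mul_comm]
  have key : ∀ M : ℕ, ((M:ℝ)/2^k' ≤ x ↔ (M:ℝ)/2^k' ≤ y) ∧ (x < (M:ℝ)/2^k' ↔ y < (M:ℝ)/2^k') := by
    intro M
    constructor
    · rw [nat_le_iff hx, nat_le_iff hy]
    · rw [← not_le, ← not_le, nat_le_iff hx, nat_le_iff hy]
  have i1 : inI k j x ↔ inI k j y := by
    unfold inI; rw [e1, e3]; exact and_congr ((key _).1) ((key _).2)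
  unfold sq1
  rw [if_congr i1 rfl rfl]



lemma integral_indicator_Ico (a b : ℝ) (hab : a ≤ b) (h0 : 0 ≤ a) (h1 : b ≤ 1) :
    ∫ x, (Set.Ico a b).indicator (fun _ => (1:ℝ)) x ∂μ1 = b - a := by
  rw [integral_indicator measurableSet_Ico, setIntegral_const]
  unfold μ1
  rw [measureReal_def, Measure.restrict_apply measurableSet_Ico,
    Set.inter_eq_self_of_subset_left
      (Set.Ico_subset_Icc_self.trans (Set.Icc_subset_Icc h0 h1)),
    Real.volume_Ico, smul_eq_mul, mul_one, ENNReal.toReal_ofReal (by linarith)]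

instance : IsFiniteMeasure μ1 := by
  constructor
  unfold μ1
  rw [Measure.restrict_apply MeasurableSet.univ, Set.univ_inter, Real.volume_Icc]
  exact ENNReal.ofReal_lt_top

lemma measurable_haar1 (k j : ℕ) : Measurable (haar1 k j) := by
  unfold haar1
  refine Measurable.ite ?_ measurable_const (Measurable.ite ?_ measurable_const measurable_const)
  · exact (measurableSet_Ico : MeasurableSet (Set.Ico ((j:ℝ)/2^k) (((j:ℝ)+1/2)/2^k)))
  · exact (measurableSet_Ico : MeasurableSet (Set.Ico (((j:ℝ)+1/2)/2^k) (((j:ℝ)+1)/2^k)))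

lemma haar1_eq (k j : ℕ) (x : ℝ) :
    haar1 k j x = (Set.Ico (((j:ℝ)+1/2)/2^k) (((j:ℝ)+1)/2^k)).indicator (fun _ => (1:ℝ)) x
      - (Set.Ico ((j:ℝ)/2^k) (((j:ℝ)+1/2)/2^k)).indicator (fun _ => (1:ℝ)) x := by
  unfold haar1
  have hd : ¬ ((j:ℝ)/2^k ≤ x ∧ x < ((j:ℝ)+1/2)/2^k) ∨
      ¬ (((j:ℝ)+1/2)/2^k ≤ x ∧ x < ((j:ℝ)+1)/2^k) := by
    by_contra hc
    push_neg at hc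
    linarith [hc.1.2, hc.2.1]
  simp only [Set.indicator_apply, Set.mem_Ico]
  split_ifs <;> first | (exfalso; tauto) | norm_num

lemma integral_haar1 (k j : ℕ) (hj : j < 2^k) : ∫ x, haar1 k j x ∂μ1 = 0 := by
  have hp : (0:ℝ) < 2^k := by positivity
  have hj' : (j:ℝ) + 1 ≤ 2^k := by exact_mod_cast Nat.succ_le_of_lt hj
  have h0 : (0:ℝ) ≤ (j:ℝ)/2^k := by positivity
  have h0' : (0:ℝ) ≤ ((j:ℝ)+1/2)/2^k := by positivity
  have h1 : ((j:ℝ)+1)/2^k ≤ 1 := by rw [div_le_one hp]; linarith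
  have h1' : ((j:ℝ)+1/2)/2^k ≤ 1 := le_trans (by gcongr; linarith) h1
  have hab : (j:ℝ)/2^k ≤ ((j:ℝ)+1/2)/2^k := by gcongr; linarith
  have hab' : ((j:ℝ)+1/2)/2^k ≤ ((j:ℝ)+1)/2^k := by gcongr; linarith
  simp only [haar1_eq]
  rw [integral_sub]
  · rw [integral_indicator_Ico _ _ hab' h0' h1, integral_indicator_Ico _ _ hab h0 h1']
    ring
  · exact (integrable_indicator_iff measurableSet_Ico).2
      (integrableOn_const (measure_lt_top μ1 _).ne)
  · exact (integrable_indicator_iff measurableSet_Ico).2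
      (integrableOn_const (measure_lt_top μ1 _).ne)

lemma integral_sq1 (k j : ℕ) (hj : j < 2^k) : ∫ x, sq1 k j x ∂μ1 = ((2:ℝ)^k)⁻¹ := by
  have hp : (0:ℝ) < 2^k := by positivity
  have hj' : (j:ℝ) + 1 ≤ 2^k := by exact_mod_cast Nat.succ_le_of_lt hj
  have heq : ∀ x, sq1 k j x = (Set.Ico ((j:ℝ)/2^k) (((j:ℝ)+1)/2^k)).indicator
      (fun _ => (1:ℝ)) x := by
    intro x
    unfold sq1 inI
    simp only [Set.indicator_apply, Set.mem_Ico]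
    congr 1
  simp only [heq]
  rw [integral_indicator_Ico _ _ (by gcongr; linarith) (by positivity)
    (by rw [div_le_one hp]; linarith)]
  field_simp
  ring

lemma inI_left (k j : ℕ) : inI k j ((j:ℝ)/2^k) := by
  refine ⟨le_refl _, ?_⟩
  rw [div_lt_div_iff₀ (by positivity) (by positivity)]
  nlinarith [pow_pos (two_pos : (0:ℝ) < 2) k]

lemma int_mul_haar_eq_zero (φ : ℝ → ℝ) (k j : ℕ) (hj : j < 2^k) (hc : ConstOn φ k j) :
    ∫ x, φ x * haar1 k j x ∂μ1 = 0 := by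
  have h : ∀ x, φ x * haar1 k j x = φ ((j:ℝ)/2^k) * haar1 k j x := by
    intro x
    by_cases hz : haar1 k j x = 0
    · rw [hz, mul_zero, mul_zero]
    · rw [hc x _ (inI_of_haar1_ne k j x hz) (inI_left k j)]
  simp_rw [h]
  rw [integral_const_mul, integral_haar1 k j hj, mul_zero]

noncomputable def μ2 : Measure (Fin 2 → ℝ) := volume.restrict (unitCube 2)

lemma μ2_eq : μ2 = Measure.pi (fun _ : Fin 2 => μ1) := by
  refine (Measure.pi_eq (μ := fun _ : Fin 2 => μ1) fun s hs => ?_).symm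
  unfold μ2 unitCube
  rw [Measure.restrict_apply (MeasurableSet.univ_pi hs), ← Set.pi_inter_distrib, volume_pi_pi]
  exact Finset.prod_congr rfl fun i _ =>
    (Measure.restrict_apply (hs i)).symm

lemma int2_mul (g0 g1 : ℝ → ℝ) :
    ∫ x, g0 (x 0) * g1 (x 1) ∂μ2 = (∫ t, g0 t ∂μ1) * ∫ t, g1 t ∂μ1 := by
  rw [μ2_eq]
  have h := measurePreserving_finTwoArrow (α := ℝ) μ1
  have := h.integral_comp (MeasurableEquiv.measurableEmbedding _)
    (fun p : ℝ × ℝ => g0 p.1 * g1 p.2)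
  rw [← integral_prod_mul g0 g1, ← this]
  rfl

abbrev Rect := (Fin 2 → ℕ) × (Fin 2 → ℕ)

lemma mem_rectsEq {n : ℕ} {R : Rect} :
    R ∈ rectsEq 2 n ↔ R.1 0 + R.1 1 = n ∧ R.2 0 < 2 ^ R.1 0 ∧ R.2 1 < 2 ^ R.1 1 := by
  unfold rectsEq
  simp only [Finset.mem_filter, Finset.mem_product, Fintype.mem_piFinset, Finset.mem_range,
    Fin.sum_univ_two, Fin.forall_fin_two]
  constructor
  · rintro ⟨_, h1, h2⟩
    exact ⟨h1, h2.1, h2.2⟩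
  · rintro ⟨h1, h2, h3⟩
    refine ⟨⟨⟨by omega, by omega⟩, ?_, ?_⟩, h1, h2, h3⟩
    · exact lt_of_lt_of_le h2 (Nat.pow_le_pow_right (by norm_num) (by omega))
    · exact lt_of_lt_of_le h3 (Nat.pow_le_pow_right (by norm_num) (by omega))

lemma mem_rectsGe {n : ℕ} {R : Rect} :
    R ∈ rectsGe 2 n ↔ R.1 0 + R.1 1 ≤ n ∧ R.2 0 < 2 ^ R.1 0 ∧ R.2 1 < 2 ^ R.1 1 := by
  unfold rectsGe
  simp only [Finset.mem_filter, Finset.mem_product, Fintype.mem_piFinset, Finset.mem_range,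
    Fin.sum_univ_two, Fin.forall_fin_two]
  constructor
  · rintro ⟨_, h1, h2⟩
    exact ⟨h1, h2.1, h2.2⟩
  · rintro ⟨h1, h2, h3⟩
    refine ⟨⟨⟨by omega, by omega⟩, ?_, ?_⟩, h1, h2, h3⟩
    · exact lt_of_lt_of_le h2 (Nat.pow_le_pow_right (by norm_num) (by omega))
    · exact lt_of_lt_of_le h3 (Nat.pow_le_pow_right (by norm_num) (by omega))

def E (n k : ℕ) : Finset Rect := (rectsEq 2 n).filter fun R => R.1 0 = k

lemma mem_E {n k : ℕ} {R : Rect} :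
    R ∈ E n k ↔ R.1 0 = k ∧ R.1 1 = n - k ∧ k ≤ n ∧ R.2 0 < 2 ^ k ∧ R.2 1 < 2 ^ (n - k) := by
  unfold E
  rw [Finset.mem_filter, mem_rectsEq]
  constructor
  · rintro ⟨⟨h1, h2, h3⟩, h4⟩
    refine ⟨h4, by omega, by omega, ?_, ?_⟩
    · rwa [h4] at h2
    · rwa [show R.1 1 = n - k by omega] at h3
  · rintro ⟨h1, h2, h3, h4, h5⟩
    refine ⟨⟨by omega, ?_, ?_⟩, h1⟩
    · rwa [h1]
    · rwa [h2]

noncomputable def eps (α : Rect → ℝ) (R : Rect) : ℝ := if α R < 0 then -1 else 1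

lemma abs_eps (α R) : |eps α R| = 1 := by
  unfold eps; split_ifs <;> norm_num

lemma mul_eps (α : Rect → ℝ) (R : Rect) : α R * eps α R = |α R| := by
  unfold eps
  split_ifs with h
  · rw [abs_of_neg h]; ring
  · rw [abs_of_nonneg (by linarith)]; ring

noncomputable def fk (n k : ℕ) (α : Rect → ℝ) (x : Fin 2 → ℝ) : ℝ :=
  ∑ R ∈ E n k, eps α R * haarR R x

noncomputable def Φ (n : ℕ) (α : Rect → ℝ) (x : Fin 2 → ℝ) : ℝ :=
  ∏ k ∈ Finset.range (n + 1), (1 + fk n k α x)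

lemma haarR_eq (R : Rect) (x : Fin 2 → ℝ) :
    haarR R x = haar1 (R.1 0) (R.2 0) (x 0) * haar1 (R.1 1) (R.2 1) (x 1) := by
  unfold haarR
  exact Fin.prod_univ_two _

lemma abs_haarR_le (R : Rect) (x : Fin 2 → ℝ) : |haarR R x| ≤ 1 := by
  rw [haarR_eq, abs_mul]
  calc |haar1 (R.1 0) (R.2 0) (x 0)| * |haar1 (R.1 1) (R.2 1) (x 1)| ≤ 1 * 1 := by
        apply mul_le_mul (abs_haar1_le _ _ _) (abs_haar1_le _ _ _) (abs_nonneg _) (by norm_num)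
    _ = 1 := by norm_num

lemma measurable_haarR (R : Rect) : Measurable (haarR R) := by
  unfold haarR
  exact Finset.measurable_prod _ fun i _ =>
    (measurable_haar1 _ _).comp (measurable_pi_apply i)

lemma haarR_unique {n k : ℕ} {R R' : Rect} (hR : R ∈ E n k) (hR' : R' ∈ E n k)
    (x : Fin 2 → ℝ) (hx : haarR R x ≠ 0) (hx' : haarR R' x ≠ 0) : R = R' := by
  rw [haarR_eq] at hx hx'
  rw [mem_E] at hR hR'
  have h0 : haar1 (R.1 0) (R.2 0) (x 0) ≠ 0 := fun h => hx (by rw [h, zero_mul])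
  have h1 : haar1 (R.1 1) (R.2 1) (x 1) ≠ 0 := fun h => hx (by rw [h, mul_zero])
  have h0' : haar1 (R'.1 0) (R'.2 0) (x 0) ≠ 0 := fun h => hx' (by rw [h, zero_mul])
  have h1' : haar1 (R'.1 1) (R'.2 1) (x 1) ≠ 0 := fun h => hx' (by rw [h, mul_zero])
  have e0 : R.2 0 = R'.2 0 := by
    apply inI_unique k _ _ (x 0)
    · have := inI_of_haar1_ne _ _ _ h0; rwa [hR.1] at this
    · have := inI_of_haar1_ne _ _ _ h0'; rwa [hR'.1] at this
  have e1 : R.2 1 = R'.2 1 := by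
    apply inI_unique (n - k) _ _ (x 1)
    · have := inI_of_haar1_ne _ _ _ h1; rwa [hR.2.1] at this
    · have := inI_of_haar1_ne _ _ _ h1'; rwa [hR'.2.1] at this
  have l0 : R.1 = R'.1 := by
    funext i
    fin_cases i
    · simp [hR.1, hR'.1]
    · simp [hR.2.1, hR'.2.1]
  have l1 : R.2 = R'.2 := by
    funext i
    fin_cases i <;> simpa
  exact Prod.ext l0 l1

lemma abs_fk_le (n k : ℕ) (α : Rect → ℝ) (x : Fin 2 → ℝ) : |fk n k α x| ≤ 1 := by
  unfold fk
  by_cases hz : ∀ R ∈ E n k, haarR R x = 0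
  · rw [Finset.sum_eq_zero fun R hR => by rw [hz R hR, mul_zero]]
    norm_num
  · push_neg at hz
    obtain ⟨R₀, hR₀, hne⟩ := hz
    rw [Finset.sum_eq_single_of_mem R₀ hR₀ (fun R hR hRne => ?_)]
    · rw [abs_mul, abs_eps, one_mul]
      exact abs_haarR_le _ _
    · by_cases h : haarR R x = 0
      · rw [h, mul_zero]
      · exact absurd (haarR_unique hR hR₀ x h hne) hRne

lemma Φ_nonneg (n : ℕ) (α : Rect → ℝ) (x : Fin 2 → ℝ) : 0 ≤ Φ n α x := by
  apply Finset.prod_nonneg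
  intro k _
  have := abs_le.1 (abs_fk_le n k α x)
  linarith [this.1]

lemma measurable_fk (n k : ℕ) (α : Rect → ℝ) : Measurable (fk n k α) := by
  unfold fk
  exact Finset.measurable_sum _ fun R _ => (measurable_haarR R).const_mul _

lemma measurable_Φ (n : ℕ) (α : Rect → ℝ) : Measurable (Φ n α) := by
  unfold Φ
  exact Finset.measurable_prod _ fun k _ => (measurable_const.add (measurable_fk n k α))

lemma abs_Φ_le (n : ℕ) (α : Rect → ℝ) (x : Fin 2 → ℝ) : |Φ n α x| ≤ 2 ^ (n + 1) := by
  unfold Φ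
  calc |∏ k ∈ Finset.range (n + 1), (1 + fk n k α x)|
      = ∏ k ∈ Finset.range (n + 1), |1 + fk n k α x| := Finset.abs_prod _ _
    _ ≤ ∏ k ∈ Finset.range (n + 1), 2 := by
        apply Finset.prod_le_prod (fun k _ => abs_nonneg _)
        intro k _
        have := abs_le.1 (abs_fk_le n k α x)
        rw [abs_le]
        constructor <;> linarith [this.1, this.2]
    _ = 2 ^ (n + 1) := by rw [Finset.prod_const, Finset.card_range]

instance : IsFiniteMeasure μ2 := by
  rw [μ2_eq]; infer_instance

lemma integrable_bdd (g : (Fin 2 → ℝ) → ℝ) (hg : Measurable g) (C : ℝ)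
    (h : ∀ x, |g x| ≤ C) : Integrable g μ2 :=
  Integrable.mono' (integrable_const C) hg.aestronglyMeasurable (ae_of_all _ h)


lemma int_prod_mul_haar_zero {ι : Type*} [DecidableEq ι] (S : Finset ι) (lv ps : ι → ℕ)
    (a b : ℕ) (hb : b < 2 ^ a) (hlt : ∀ k ∈ S, lv k < a) :
    ∫ t, haar1 a b t * ∏ k ∈ S, haar1 (lv k) (ps k) t ∂μ1 = 0 := by
  have h : ∀ t, haar1 a b t * ∏ k ∈ S, haar1 (lv k) (ps k) t
      = (∏ k ∈ S, haar1 (lv k) (ps k) t) * haar1 a b t := fun t => mul_comm _ _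
  simp_rw [h]
  exact int_mul_haar_eq_zero _ a b hb
    (constOn_prod S _ fun k hk => constOn_haar1 _ _ (hlt k hk))

lemma int_haar_mul_prod_zero_max {ι : Type*} [DecidableEq ι] (S : Finset ι) (lv ps : ι → ℕ)
    (a b : ℕ) (m : ι) (hm : m ∈ S) (hmax : ∀ k ∈ S, k ≠ m → lv k < lv m) (ha : a < lv m)
    (hps : ps m < 2 ^ lv m) :
    ∫ t, haar1 a b t * ∏ k ∈ S, haar1 (lv k) (ps k) t ∂μ1 = 0 := by
  have h : ∀ t, haar1 a b t * ∏ k ∈ S, haar1 (lv k) (ps k) t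
      = (haar1 a b t * ∏ k ∈ S.erase m, haar1 (lv k) (ps k) t) * haar1 (lv m) (ps m) t := by
    intro t
    rw [← Finset.prod_erase_mul S _ hm]
    ring
  simp_rw [h]
  exact int_mul_haar_eq_zero _ _ _ hps
    (constOn_mul (constOn_haar1 _ _ ha) (constOn_prod _ _ fun k hk =>
      constOn_haar1 _ _ (hmax k (Finset.mem_of_mem_erase hk) (Finset.ne_of_mem_erase hk))))

lemma int_prod_haar_zero {ι : Type*} [DecidableEq ι] (S : Finset ι) (lv ps : ι → ℕ)
    (m : ι) (hm : m ∈ S) (hmax : ∀ k ∈ S, k ≠ m → lv k < lv m)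
    (hps : ps m < 2 ^ lv m) :
    ∫ t, ∏ k ∈ S, haar1 (lv k) (ps k) t ∂μ1 = 0 := by
  have h : ∀ t, ∏ k ∈ S, haar1 (lv k) (ps k) t
      = (∏ k ∈ S.erase m, haar1 (lv k) (ps k) t) * haar1 (lv m) (ps m) t := by
    intro t
    rw [Finset.prod_erase_mul S _ hm]
  simp_rw [h]
  exact int_mul_haar_eq_zero _ _ _ hps
    (constOn_prod _ _ fun k hk =>
      constOn_haar1 _ _ (hmax k (Finset.mem_of_mem_erase hk) (Finset.ne_of_mem_erase hk)))

lemma int_monomial_zero (n : ℕ) (R : Rect) (hR : R ∈ rectsGe 2 n) (S : Finset ℕ)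
    (hne : S ≠ {R.1 0}) (g : ℕ → Rect) (hg : ∀ k ∈ S, g k ∈ E n k) :
    ∫ x, haarR R x * ∏ k ∈ S, haarR (g k) x ∂μ2 = 0 := by
  classical
  obtain ⟨hrs, hj0, hj1⟩ := mem_rectsGe.1 hR
  have hgE : ∀ k ∈ S, (g k).1 0 = k ∧ (g k).1 1 = n - k ∧ k ≤ n ∧
      (g k).2 0 < 2 ^ k ∧ (g k).2 1 < 2 ^ (n - k) := fun k hk => mem_E.1 (hg k hk)
  have hsplit : ∀ x : Fin 2 → ℝ, haarR R x * ∏ k ∈ S, haarR (g k) x =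
      (haar1 (R.1 0) (R.2 0) (x 0) * ∏ k ∈ S, haar1 k ((g k).2 0) (x 0)) *
      (haar1 (R.1 1) (R.2 1) (x 1) * ∏ k ∈ S, haar1 (n - k) ((g k).2 1) (x 1)) := by
    intro x
    rw [haarR_eq]
    have hc : ∀ k ∈ S, haarR (g k) x
        = haar1 k ((g k).2 0) (x 0) * haar1 (n - k) ((g k).2 1) (x 1) := by
      intro k hk
      obtain ⟨h1, h2, _, _, _⟩ := hgE k hk
      rw [haarR_eq, h1, h2]
    rw [Finset.prod_congr rfl hc, Finset.prod_mul_distrib]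
    ring
  simp_rw [hsplit]
  rw [int2_mul (fun t => haar1 (R.1 0) (R.2 0) t * ∏ k ∈ S, haar1 k ((g k).2 0) t)
    (fun t => haar1 (R.1 1) (R.2 1) t * ∏ k ∈ S, haar1 (n - k) ((g k).2 1) t)]
  by_cases hr : R.1 0 ∈ S
  · by_cases hj : (g (R.1 0)).2 0 = R.2 0
    · -- square in the x coordinate; S has another element
      have hT : (S.erase (R.1 0)).Nonempty := by
        rcases Finset.eq_empty_or_nonempty (S.erase (R.1 0)) with he | h
        · exfalso
          apply hne
          apply Finset.eq_singleton_iff_unique_mem.2 ⟨hr, fun k hk => ?_⟩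
          by_contra hk'
          exact (Finset.notMem_empty k) (he ▸ Finset.mem_erase.2 ⟨hk', hk⟩)
        · exact h
      set m := (S.erase (R.1 0)).max' hT with hm
      have hmS : m ∈ S := Finset.mem_of_mem_erase (Finset.max'_mem _ hT)
      have hmr : m ≠ R.1 0 := Finset.ne_of_mem_erase (Finset.max'_mem _ hT)
      rcases Nat.lt_or_ge (R.1 0) m with hlt | hge
      · -- collapse in x at level m
        apply mul_eq_zero_of_left
        apply int_haar_mul_prod_zero_max S (fun k => k) (fun k => (g k).2 0) _ _ m hmS
        · intro k hk hkm
          by_cases hkr : k = R.1 0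
          · subst hkr; exact hlt
          · exact lt_of_le_of_ne (Finset.le_max' _ _ (Finset.mem_erase.2 ⟨hkr, hk⟩)) hkm
        · exact hlt
        · exact (hgE m hmS).2.2.2.1
      · have hmlt : m < R.1 0 := lt_of_le_of_ne hge hmr
        -- all other elements of S are below R.1 0; collapse in y at level n - S.min'
        apply mul_eq_zero_of_right
        have hSne : S.Nonempty := ⟨_, hr⟩
        set m0 := S.min' hSne with hm0
        have hm0S : m0 ∈ S := Finset.min'_mem _ hSne
        have hm0r : m0 < R.1 0 := by
          rcases Finset.mem_erase.1 (Finset.max'_mem _ hT) with ⟨_, hmem⟩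
          calc m0 ≤ m := Finset.min'_le _ _ hmS
            _ < R.1 0 := hmlt
        have hrn : R.1 0 ≤ n := by omega
        apply int_haar_mul_prod_zero_max S (fun k => n - k) (fun k => (g k).2 1) _ _ m0 hm0S
        · intro k hk hkm
          have h1 : m0 ≤ k := Finset.min'_le _ _ hk
          have h2 : k ≤ n := (hgE k hk).2.2.1
          omega
        · -- R.1 1 < n - m0
          omega
        · exact (hgE m0 hm0S).2.2.2.2
    · -- x positions differ at the same level: pointwise zero
      apply mul_eq_zero_of_left
      have hz : ∀ t, haar1 (R.1 0) (R.2 0) t * ∏ k ∈ S, haar1 k ((g k).2 0) t = 0 := by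
        intro t
        rw [← Finset.mul_prod_erase S _ hr,
          show haar1 (R.1 0) (R.2 0) t * (haar1 (R.1 0) ((g (R.1 0)).2 0) t *
            ∏ k ∈ S.erase (R.1 0), haar1 k ((g k).2 0) t)
          = (haar1 (R.1 0) (R.2 0) t * haar1 (R.1 0) ((g (R.1 0)).2 0) t) *
            ∏ k ∈ S.erase (R.1 0), haar1 k ((g k).2 0) t from by ring,
          haar1_mul_ne _ _ _ _ (fun h => hj h.symm), zero_mul]
      simp_rw [hz]
      exact integral_zero _ _
  · rcases Finset.eq_empty_or_nonempty S with hSe | hSne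
    · subst hSe
      apply mul_eq_zero_of_left
      simp only [Finset.prod_empty, mul_one]
      exact integral_haar1 _ _ hj0
    · set m := S.max' hSne with hm
      have hmS : m ∈ S := Finset.max'_mem _ hSne
      have hmr : m ≠ R.1 0 := fun h => hr (h ▸ hmS)
      apply mul_eq_zero_of_left
      rcases Nat.lt_or_ge (R.1 0) m with hlt | hge
      · apply int_haar_mul_prod_zero_max S (fun k => k) (fun k => (g k).2 0) _ _ m hmS
        · intro k hk hkm
          exact lt_of_le_of_ne (Finset.le_max' _ _ hk) hkm
        · exact hlt
        · exact (hgE m hmS).2.2.2.1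
      · have hmlt : m < R.1 0 := lt_of_le_of_ne hge hmr
        apply int_prod_mul_haar_zero S (fun k => k) (fun k => (g k).2 0) _ _ hj0
        intro k hk
        exact lt_of_le_of_lt (Finset.le_max' _ _ hk) hmlt
instance : IsProbabilityMeasure μ1 := by
  constructor
  unfold μ1
  rw [Measure.restrict_apply MeasurableSet.univ, Set.univ_inter, Real.volume_Icc]
  norm_num

instance : IsProbabilityMeasure μ2 := by
  rw [μ2_eq]; infer_instance

lemma pow_mul_pow_inv (k m : ℕ) : ((2:ℝ) ^ k)⁻¹ * ((2:ℝ) ^ m)⁻¹ = ((2:ℝ) ^ (k + m))⁻¹ := by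
  rw [← mul_inv, ← pow_add]

/-- Pair integral at the same first level. -/
lemma int_haarR_pair {n : ℕ} {R R' : Rect} (hR : R ∈ rectsGe 2 n) (hR' : R' ∈ E n (R.1 0)) :
    ∫ x, haarR R x * haarR R' x ∂μ2 =
      if R.1 0 + R.1 1 = n ∧ R' = R then ((2:ℝ) ^ n)⁻¹ else 0 := by
  classical
  obtain ⟨hrs, hj0, hj1⟩ := mem_rectsGe.1 hR
  obtain ⟨hl0, hl1, hkn, hp0, hp1⟩ := mem_E.1 hR'
  have hsplit : ∀ x : Fin 2 → ℝ, haarR R x * haarR R' x =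
      (haar1 (R.1 0) (R.2 0) (x 0) * haar1 (R.1 0) (R'.2 0) (x 0)) *
      (haar1 (R.1 1) (R.2 1) (x 1) * haar1 (n - R.1 0) (R'.2 1) (x 1)) := by
    intro x
    rw [haarR_eq, haarR_eq R', hl0, hl1]
    ring
  simp_rw [hsplit]
  rw [int2_mul (fun t => haar1 (R.1 0) (R.2 0) t * haar1 (R.1 0) (R'.2 0) t)
    (fun t => haar1 (R.1 1) (R.2 1) t * haar1 (n - R.1 0) (R'.2 1) t)]
  by_cases h0 : R'.2 0 = R.2 0
  · by_cases hn : R.1 0 + R.1 1 = n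
    · have hs : R.1 1 = n - R.1 0 := by omega
      by_cases h1 : R'.2 1 = R.2 1
      · have hRR : R' = R := by
          refine Prod.ext ?_ ?_
          · funext i; fin_cases i
            · simpa using hl0
            · show R'.1 1 = R.1 1
              rw [hl1, hs]
          · funext i; fin_cases i
            · simpa using h0
            · simpa using h1
        rw [if_pos ⟨hn, hRR⟩, h0, h1, ← hs]
        simp_rw [haar1_mul_self]
        rw [integral_sq1 _ _ hj0, integral_sq1 _ _ hj1, pow_mul_pow_inv, hn]
      · rw [if_neg (fun h => h1 (by rw [h.2]))]
        apply mul_eq_zero_of_right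
        have hz : ∀ t, haar1 (R.1 1) (R.2 1) t * haar1 (n - R.1 0) (R'.2 1) t = 0 := by
          intro t
          rw [← hs]
          exact haar1_mul_ne _ _ _ _ (fun h => h1 (h.symm))
        simp_rw [hz]
        exact integral_zero _ _
    · rw [if_neg (fun h => hn h.1)]
      apply mul_eq_zero_of_right
      have hslt : R.1 1 < n - R.1 0 := by omega
      exact int_mul_haar_eq_zero _ _ _ hp1 (constOn_haar1 _ _ hslt)
  · rw [if_neg (fun h => h0 (by rw [h.2]))]
    apply mul_eq_zero_of_left
    have hz : ∀ t, haar1 (R.1 0) (R.2 0) t * haar1 (R.1 0) (R'.2 0) t = 0 :=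
      fun t => haar1_mul_ne _ _ _ _ (fun h => h0 h.symm)
    simp_rw [hz]
    exact integral_zero _ _

/-- A product of Haar functions over a nonempty set of distinct levels integrates to zero. -/
lemma int_prodR_zero (n : ℕ) (S : Finset ℕ) (hSne : S.Nonempty) (g : ℕ → Rect)
    (hg : ∀ k ∈ S, g k ∈ E n k) :
    ∫ x, ∏ k ∈ S, haarR (g k) x ∂μ2 = 0 := by
  classical
  have hgE : ∀ k ∈ S, (g k).1 0 = k ∧ (g k).1 1 = n - k ∧ k ≤ n ∧
      (g k).2 0 < 2 ^ k ∧ (g k).2 1 < 2 ^ (n - k) := fun k hk => mem_E.1 (hg k hk)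
  have hsplit : ∀ x : Fin 2 → ℝ, ∏ k ∈ S, haarR (g k) x =
      (∏ k ∈ S, haar1 k ((g k).2 0) (x 0)) * (∏ k ∈ S, haar1 (n - k) ((g k).2 1) (x 1)) := by
    intro x
    have hc : ∀ k ∈ S, haarR (g k) x
        = haar1 k ((g k).2 0) (x 0) * haar1 (n - k) ((g k).2 1) (x 1) := by
      intro k hk
      obtain ⟨h1, h2, _, _, _⟩ := hgE k hk
      rw [haarR_eq, h1, h2]
    rw [Finset.prod_congr rfl hc, Finset.prod_mul_distrib]
  simp_rw [hsplit]
  rw [int2_mul (fun t => ∏ k ∈ S, haar1 k ((g k).2 0) t)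
    (fun t => ∏ k ∈ S, haar1 (n - k) ((g k).2 1) t)]
  apply mul_eq_zero_of_left
  apply int_prod_haar_zero S (fun k => k) (fun k => (g k).2 0) (S.max' hSne) (Finset.max'_mem _ _)
  · intro k hk hkm
    exact lt_of_le_of_ne (Finset.le_max' _ _ hk) hkm
  · exact (hgE _ (Finset.max'_mem _ _)).2.2.2.1

lemma abs_prod_fk_le (n : ℕ) (α : Rect → ℝ) (S : Finset ℕ) (x : Fin 2 → ℝ) :
    |∏ k ∈ S, fk n k α x| ≤ 1 := by
  rw [Finset.abs_prod]
  apply Finset.prod_le_one (fun k _ => abs_nonneg _) (fun k _ => abs_fk_le n k α x)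

lemma int_haarR_prodfk (n : ℕ) (α : Rect → ℝ) (R : Rect) (hR : R ∈ rectsGe 2 n)
    (S : Finset ℕ) :
    ∫ x, haarR R x * ∏ k ∈ S, fk n k α x ∂μ2 =
      if R.1 0 + R.1 1 = n ∧ S = {R.1 0} then eps α R * ((2:ℝ) ^ n)⁻¹ else 0 := by
  classical
  by_cases hS : S = {R.1 0}
  · subst hS
    simp only [Finset.prod_singleton]
    unfold fk
    simp_rw [Finset.mul_sum]
    rw [integral_finset_sum _ (fun R' _ => by
      apply integrable_bdd _ ((measurable_haarR R).mul ((measurable_haarR R').const_mul _)) 1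
      intro x
      simp only [Pi.mul_apply]; rw [abs_mul, abs_mul, abs_eps, one_mul]
      have h1 := abs_haarR_le R x
      have h2 := abs_haarR_le R' x
      nlinarith [abs_nonneg (haarR R x), abs_nonneg (haarR R' x)])]
    have hterm : ∀ R' ∈ E n (R.1 0), ∫ x, haarR R x * (eps α R' * haarR R' x) ∂μ2
        = eps α R' * (if R.1 0 + R.1 1 = n ∧ R' = R then ((2:ℝ) ^ n)⁻¹ else 0) := by
      intro R' hR'
      have : ∀ x, haarR R x * (eps α R' * haarR R' x)
          = eps α R' * (haarR R x * haarR R' x) := fun x => by ring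
      simp_rw [this]
      rw [integral_const_mul, int_haarR_pair hR hR']
    rw [Finset.sum_congr rfl hterm]
    by_cases hn : R.1 0 + R.1 1 = n
    · rw [if_pos (by simp [hn])]
      have hRmem : R ∈ E n (R.1 0) := by
        rw [mem_E]
        obtain ⟨h1, h2, h3⟩ := mem_rectsGe.1 hR
        exact ⟨rfl, by omega, by omega, h2, by rwa [show n - R.1 0 = R.1 1 by omega]⟩
      rw [Finset.sum_eq_single_of_mem R hRmem (fun R' _ hne => by
        rw [if_neg (fun h => hne h.2), mul_zero])]
      rw [if_pos ⟨hn, rfl⟩]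
    · rw [if_neg (by simp [hn])]
      apply Finset.sum_eq_zero
      intro R' _
      rw [if_neg (fun h => hn h.1), mul_zero]
  · rw [if_neg (fun h => hS h.2)]
    unfold fk
    simp_rw [Finset.prod_sum]
    simp_rw [Finset.mul_sum]
    rw [integral_finset_sum _ (fun p _ => by
      apply integrable_bdd _ ?_ 1
      · intro x
        rw [abs_mul]
        calc |haarR R x| * |∏ a ∈ S.attach, eps α (p a.1 a.2) * haarR (p a.1 a.2) x|
            ≤ 1 * 1 := by
              apply mul_le_mul (abs_haarR_le _ _) ?_ (abs_nonneg _) (by norm_num)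
              rw [Finset.abs_prod]
              apply Finset.prod_le_one (fun a _ => abs_nonneg _)
              intro a _
              rw [abs_mul, abs_eps, one_mul]
              exact abs_haarR_le _ _
          _ = 1 := by norm_num
      · exact (measurable_haarR R).mul (Finset.measurable_prod _ fun a _ =>
          (measurable_haarR _).const_mul _))]
    apply Finset.sum_eq_zero
    intro p hp
    set gp : ℕ → Rect := fun k => if h : k ∈ S then p k h else R with hgp
    have hattach : ∀ x : Fin 2 → ℝ, ∏ a ∈ S.attach, (eps α (p a.1 a.2) * haarR (p a.1 a.2) x)
        = (∏ k ∈ S, eps α (gp k)) * ∏ k ∈ S, haarR (gp k) x := by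
      intro x
      rw [← Finset.prod_mul_distrib, ← Finset.prod_attach S
        (fun k => eps α (gp k) * haarR (gp k) x)]
      apply Finset.prod_congr rfl
      intro a _
      have : gp a.1 = p a.1 a.2 := by rw [hgp]; exact dif_pos a.2
      rw [this]
    have hre : ∀ x : Fin 2 → ℝ, haarR R x * ∏ a ∈ S.attach,
        (eps α (p a.1 a.2) * haarR (p a.1 a.2) x)
        = (∏ k ∈ S, eps α (gp k)) * (haarR R x * ∏ k ∈ S, haarR (gp k) x) := by
      intro x
      rw [hattach]
      ring
    simp_rw [hre]
    rw [integral_const_mul, int_monomial_zero n R hR S hS gp (fun k hk => by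
      have := Finset.mem_pi.1 hp k hk
      rwa [show gp k = p k hk from dif_pos hk]), mul_zero]


lemma Φ_expand (n : ℕ) (α : Rect → ℝ) (x : Fin 2 → ℝ) :
    Φ n α x = ∑ S ∈ (Finset.range (n + 1)).powerset, ∏ k ∈ S, fk n k α x := by
  unfold Φ
  have h : ∀ k ∈ Finset.range (n + 1), (1 : ℝ) + fk n k α x = fk n k α x + 1 :=
    fun k _ => add_comm _ _
  rw [Finset.prod_congr rfl h, Finset.prod_add]
  exact Finset.sum_congr rfl fun S _ => by rw [Finset.prod_const_one, mul_one]

lemma int_haarR_Φ (n : ℕ) (α : Rect → ℝ) (R : Rect) (hR : R ∈ rectsGe 2 n) :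
    ∫ x, haarR R x * Φ n α x ∂μ2 =
      if R.1 0 + R.1 1 = n then eps α R * ((2:ℝ) ^ n)⁻¹ else 0 := by
  classical
  simp_rw [Φ_expand, Finset.mul_sum]
  rw [integral_finset_sum _ (fun S _ => by
    apply integrable_bdd _ ((measurable_haarR R).mul
      (Finset.measurable_prod _ fun k _ => measurable_fk n k α)) 1
    intro x
    simp only [Pi.mul_apply]; rw [abs_mul]
    have h1 := abs_haarR_le R x
    have h2 := abs_prod_fk_le n α S x
    nlinarith [abs_nonneg (haarR R x), abs_nonneg (∏ k ∈ S, fk n k α x)])]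
  rw [Finset.sum_congr rfl (fun S hS => int_haarR_prodfk n α R hR S)]
  by_cases hn : R.1 0 + R.1 1 = n
  · rw [if_pos hn]
    have hmem : ({R.1 0} : Finset ℕ) ∈ (Finset.range (n + 1)).powerset := by
      rw [Finset.mem_powerset, Finset.singleton_subset_iff, Finset.mem_range]
      omega
    rw [Finset.sum_eq_single_of_mem _ hmem (fun S _ hne => by
      rw [if_neg (fun h => hne h.2)])]
    rw [if_pos ⟨hn, rfl⟩]
  · rw [if_neg hn]
    apply Finset.sum_eq_zero
    intro S _
    rw [if_neg (fun h => hn h.1)]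

lemma int_Φ (n : ℕ) (α : Rect → ℝ) : ∫ x, Φ n α x ∂μ2 = 1 := by
  classical
  simp_rw [Φ_expand]
  rw [integral_finset_sum _ (fun S _ => integrable_bdd _
    (Finset.measurable_prod _ fun k _ => measurable_fk n k α) 1 (abs_prod_fk_le n α S))]
  have hterm : ∀ S ∈ (Finset.range (n + 1)).powerset,
      ∫ x, ∏ k ∈ S, fk n k α x ∂μ2 = if S = ∅ then 1 else 0 := by
    intro S _
    by_cases hS : S = ∅
    · subst hS
      simp only [Finset.prod_empty]
      rw [integral_const]
      simp
    · rw [if_neg hS]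
      unfold fk
      simp_rw [Finset.prod_sum]
      rw [integral_finset_sum _ (fun p _ => by
        apply integrable_bdd _ (Finset.measurable_prod _ fun a _ =>
          (measurable_haarR _).const_mul _) 1
        intro x
        rw [Finset.abs_prod]
        apply Finset.prod_le_one (fun a _ => abs_nonneg _)
        intro a _
        rw [abs_mul, abs_eps, one_mul]
        exact abs_haarR_le _ _)]
      apply Finset.sum_eq_zero
      intro p hp
      set gp : ℕ → Rect := fun k => if h : k ∈ S then p k h else (0, 0) with hgp
      have hattach : ∀ x : Fin 2 → ℝ, ∏ a ∈ S.attach, (eps α (p a.1 a.2) * haarR (p a.1 a.2) x)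
          = (∏ k ∈ S, eps α (gp k)) * ∏ k ∈ S, haarR (gp k) x := by
        intro x
        rw [← Finset.prod_mul_distrib, ← Finset.prod_attach S
          (fun k => eps α (gp k) * haarR (gp k) x)]
        apply Finset.prod_congr rfl
        intro a _
        have : gp a.1 = p a.1 a.2 := by rw [hgp]; exact dif_pos a.2
        rw [this]
      simp_rw [hattach]
      rw [integral_const_mul, int_prodR_zero n S (Finset.nonempty_of_ne_empty hS) gp
        (fun k hk => by
          have := Finset.mem_pi.1 hp k hk
          rwa [show gp k = p k hk from dif_pos hk]), mul_zero]
  rw [Finset.sum_congr rfl hterm, Finset.sum_ite_eq' _ ∅ (fun _ => (1:ℝ))]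
  simp


lemma rectsGe_filter (n : ℕ) :
    (rectsGe 2 n).filter (fun R => R.1 0 + R.1 1 = n) = rectsEq 2 n := by
  apply Finset.ext
  intro R
  rw [Finset.mem_filter, mem_rectsGe, mem_rectsEq]
  constructor
  · rintro ⟨⟨_, h2, h3⟩, h4⟩
    exact ⟨h4, h2, h3⟩
  · rintro ⟨h1, h2, h3⟩
    exact ⟨⟨by omega, h2, h3⟩, h1⟩

lemma int_fΦ (n : ℕ) (α : Rect → ℝ) :
    ∫ x, (∑ R ∈ rectsGe 2 n, α R * haarR R x) * Φ n α x ∂μ2 =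
      ((2:ℝ) ^ n)⁻¹ * ∑ R ∈ rectsEq 2 n, |α R| := by
  classical
  simp_rw [Finset.sum_mul, mul_assoc]
  rw [integral_finset_sum _ (fun R hR => by
    apply integrable_bdd _ (((measurable_haarR R).mul (measurable_Φ n α)).const_mul _)
      (|α R| * 2 ^ (n + 1))
    intro x
    rw [abs_mul, Pi.mul_apply, abs_mul]
    have h1 := abs_haarR_le R x
    have h2 := abs_Φ_le n α x
    have h3 := abs_nonneg (α R)
    have h4 : |haarR R x| * |Φ n α x| ≤ 2 ^ (n + 1) := by
      nlinarith [abs_nonneg (haarR R x), abs_nonneg (Φ n α x)]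
    exact mul_le_mul_of_nonneg_left h4 h3)]
  have hterm : ∀ R ∈ rectsGe 2 n, ∫ x, α R * (haarR R x * Φ n α x) ∂μ2
      = if R.1 0 + R.1 1 = n then |α R| * ((2:ℝ) ^ n)⁻¹ else 0 := by
    intro R hR
    rw [integral_const_mul, int_haarR_Φ n α R hR]
    by_cases hn : R.1 0 + R.1 1 = n
    · rw [if_pos hn, if_pos hn, ← mul_assoc, mul_eps]
    · rw [if_neg hn, if_neg hn, mul_zero]
  rw [Finset.sum_congr rfl hterm, ← Finset.sum_filter, rectsGe_filter, ← Finset.sum_mul,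
    mul_comm]

end SB

/-- **Talagrand–Temlyakov small ball inequality in dimension 2.** -/
theorem small_ball_two_dim :
    ∃ C : ℝ, 0 < C ∧ ∀ n : ℕ, 1 ≤ n → ∀ α : ((Fin 2 → ℕ) × (Fin 2 → ℕ)) → ℝ,
      ENNReal.ofReal ((2 : ℝ) ^ (-(n : ℝ)) * ∑ R ∈ rectsEq 2 n, |α R|) ≤
        ENNReal.ofReal C *
          eLpNorm (fun x => ∑ R ∈ rectsGe 2 n, α R * haarR R x) ⊤
            (volume.restrict (unitCube 2)) := by
  classical
  refine ⟨1, one_pos, fun n hn α => ?_⟩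
  have hμ : volume.restrict (unitCube 2) = SB.μ2 := rfl
  rw [hμ]
  set F : (Fin 2 → ℝ) → ℝ := fun x => ∑ R ∈ rectsGe 2 n, α R * haarR R x with hF
  have hFm : Measurable F := Finset.measurable_sum _ fun R _ =>
    (SB.measurable_haarR R).const_mul _
  have hFb : ∀ x, |F x| ≤ ∑ R ∈ rectsGe 2 n, |α R| := by
    intro x
    calc |F x| ≤ ∑ R ∈ rectsGe 2 n, |α R * haarR R x| := Finset.abs_sum_le_sum_abs _ _
      _ ≤ ∑ R ∈ rectsGe 2 n, |α R| := by
          apply Finset.sum_le_sum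
          intro R _
          rw [abs_mul]
          exact mul_le_of_le_one_right (abs_nonneg _) (SB.abs_haarR_le R x)
  have hmem : MemLp F ⊤ SB.μ2 := memLp_top_of_bound hFm.aestronglyMeasurable _
    (ae_of_all _ (fun x => by rw [Real.norm_eq_abs]; exact hFb x))
  have hne : eLpNorm F ⊤ SB.μ2 ≠ ⊤ := hmem.2.ne
  set M := (eLpNorm F ⊤ SB.μ2).toReal with hM
  have hae : ∀ᵐ x ∂SB.μ2, |F x| ≤ M := by
    filter_upwards [ae_le_eLpNormEssSup (f := F) (μ := SB.μ2)] with x hx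
    have hx' : (‖F x‖₊ : ℝ≥0∞) ≤ eLpNorm F ⊤ SB.μ2 := by
      rw [eLpNorm_exponent_top]
      exact hx
    have := ENNReal.toReal_mono hne hx'
    rwa [ENNReal.coe_toReal, coe_nnnorm, Real.norm_eq_abs] at this
  have key1 : ((2:ℝ) ^ n)⁻¹ * ∑ R ∈ rectsEq 2 n, |α R| ≤ M := by
    rw [← SB.int_fΦ n α]
    have hint1 : Integrable (fun x => F x * SB.Φ n α x) SB.μ2 := by
      apply SB.integrable_bdd _ (hFm.mul (SB.measurable_Φ n α))
        ((∑ R ∈ rectsGe 2 n, |α R|) * 2 ^ (n + 1))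
      intro x
      simp only [Pi.mul_apply]; rw [abs_mul]
      have h1 := hFb x
      have h2 := SB.abs_Φ_le n α x
      nlinarith [abs_nonneg (F x), abs_nonneg (SB.Φ n α x)]
    have hint2 : Integrable (fun x => M * SB.Φ n α x) SB.μ2 :=
      (SB.integrable_bdd (SB.Φ n α) (SB.measurable_Φ n α) (2 ^ (n + 1))
        (SB.abs_Φ_le n α)).const_mul M
    calc ∫ x, F x * SB.Φ n α x ∂SB.μ2 ≤ ∫ x, M * SB.Φ n α x ∂SB.μ2 := by
          apply integral_mono_ae hint1 hint2
          filter_upwards [hae] with x hx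
          have hp := SB.Φ_nonneg n α x
          have hle : F x ≤ |F x| := le_abs_self _
          nlinarith
      _ = M * ∫ x, SB.Φ n α x ∂SB.μ2 := integral_const_mul _ _
      _ = M := by rw [SB.int_Φ, mul_one]
  have hrw : (2:ℝ) ^ (-(n:ℝ)) = ((2:ℝ) ^ n)⁻¹ := by
    rw [Real.rpow_neg (by norm_num), Real.rpow_natCast]
  rw [hrw, ENNReal.ofReal_one, one_mul]
  calc ENNReal.ofReal (((2:ℝ) ^ n)⁻¹ * ∑ R ∈ rectsEq 2 n, |α R|)
      ≤ ENNReal.ofReal M := ENNReal.ofReal_le_ofReal key1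
    _ = eLpNorm F ⊤ SB.μ2 := ENNReal.ofReal_toReal hne
end

section
/- For every dimension d ≥ 2 there is a constant C_d such that for every integer n ≥ 1 and every choice of real coefficients α(R), one for each dyadic rectangle R ⊂ [0,1]^d with |R| ≥ 2^{-n}, one has Σ_{|R| = 2^{-n}} |α(R)| · |R| ≤ C_d · n^{(d−1)/2} · ‖ Σ_{|R| ≥ 2^{-n}} α(R) h_R ‖_{L^∞([0,1]^d)}. -/
open MeasureTheory
open scoped ENNReal Classical

open Set

def dI (a p : ℕ) : Set ℝ := Set.Ico ((p : ℝ) / 2 ^ a) (((p : ℝ) + 1) / 2 ^ a)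

lemma haar1_eq (k j : ℕ) (x : ℝ) :
    haar1 k j x = (dI (k+1) (2*j+1)).indicator 1 x - (dI (k+1) (2*j)).indicator 1 x := by
  unfold haar1 dI
  simp only [Set.indicator_apply, Set.mem_Ico, Pi.one_apply]
  push_cast
  rw [show (2*(j:ℝ))/2^(k+1) = (j:ℝ)/2^k by ring,
    show (2*(j:ℝ)+1)/2^(k+1) = ((j:ℝ)+1/2)/2^k by ring,
    show (2*(j:ℝ)+1+1)/2^(k+1) = ((j:ℝ)+1)/2^k by ring]
  have h2k : (0:ℝ) < 2^k := by positivity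
  have hac : (j:ℝ)/2^k < ((j:ℝ)+1/2)/2^k := by
    rw [div_lt_div_iff₀ h2k h2k]; nlinarith
  have hcb : ((j:ℝ)+1/2)/2^k < ((j:ℝ)+1)/2^k := by
    rw [div_lt_div_iff₀ h2k h2k]; nlinarith
  by_cases h1 : (j:ℝ)/2^k ≤ x ∧ x < ((j:ℝ)+1/2)/2^k
  · have h2 : ¬(((j:ℝ)+1/2)/2^k ≤ x ∧ x < ((j:ℝ)+1)/2^k) := fun h => absurd h1.2 (not_lt.2 h.1)
    rw [if_pos h1, if_neg h2, if_pos h1]; norm_num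
  · by_cases h2 : ((j:ℝ)+1/2)/2^k ≤ x ∧ x < ((j:ℝ)+1)/2^k
    · rw [if_neg h1, if_pos h2, if_neg h1]; norm_num
    · rw [if_neg h1, if_neg h2, if_neg h1]; norm_num

lemma castA {a m u v : ℕ} (h : u ≤ v * 2 ^ m) : (u : ℝ) / 2 ^ (a + m) ≤ (v : ℝ) / 2 ^ a := by
  rw [div_le_div_iff₀ (by positivity) (by positivity), pow_add]
  have h' : (u : ℝ) ≤ (v : ℝ) * 2 ^ m := by exact_mod_cast h
  nlinarith [pow_pos (show (0:ℝ) < 2 by norm_num) a, pow_pos (show (0:ℝ) < 2 by norm_num) m]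

lemma castB {a m u v : ℕ} (h : v * 2 ^ m ≤ u) : (v : ℝ) / 2 ^ a ≤ (u : ℝ) / 2 ^ (a + m) := by
  rw [div_le_div_iff₀ (by positivity) (by positivity), pow_add]
  have h' : (v : ℝ) * 2 ^ m ≤ (u : ℝ) := by exact_mod_cast h
  nlinarith [pow_pos (show (0:ℝ) < 2 by norm_num) a, pow_pos (show (0:ℝ) < 2 by norm_num) m]

lemma dI_subset {a b p q : ℕ} (h : a ≤ b) (hpq : q / 2 ^ (b - a) = p) : dI b q ⊆ dI a p := by
  obtain ⟨m, rfl⟩ := Nat.exists_eq_add_of_le h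
  rw [Nat.add_sub_cancel_left] at hpq
  have hm : (0:ℕ) < 2 ^ m := Nat.pow_pos (by norm_num)
  have h1 : p * 2 ^ m ≤ q := by
    subst hpq; exact Nat.div_mul_le_self q _
  have h2 : q + 1 ≤ (p + 1) * 2 ^ m := by
    have : q < (p + 1) * 2 ^ m := (Nat.div_lt_iff_lt_mul hm).1 (by omega)
    omega
  intro x hx
  obtain ⟨hx1, hx2⟩ := hx
  constructor
  · exact le_trans (castB h1) hx1
  · refine lt_of_lt_of_le hx2 ?_
    have := castA (a := a) h2
    push_cast at this ⊢
    linarith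

lemma dI_disjoint {a b p q : ℕ} (h : a ≤ b) (hpq : q / 2 ^ (b - a) ≠ p) : dI a p ∩ dI b q = ∅ := by
  obtain ⟨m, rfl⟩ := Nat.exists_eq_add_of_le h
  rw [Nat.add_sub_cancel_left] at hpq
  have hm : (0:ℕ) < 2 ^ m := Nat.pow_pos (by norm_num)
  rw [Set.eq_empty_iff_forall_notMem]
  rintro x ⟨⟨ha1, ha2⟩, ⟨hb1, hb2⟩⟩
  rcases Nat.lt_or_ge (q / 2 ^ m) p with hc | hc
  · have h1 : q + 1 ≤ p * 2 ^ m := by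
      have : q < p * 2 ^ m := (Nat.div_lt_iff_lt_mul hm).1 hc
      omega
    have := castA (a := a) h1
    push_cast at this
    linarith
  · have hc' : p + 1 ≤ q / 2 ^ m := by omega
    have h1 : (p + 1) * 2 ^ m ≤ q := (Nat.le_div_iff_mul_le hm).1 hc'
    have := castB (a := a) h1
    push_cast at this
    linarith

lemma measurableSet_dI (a p : ℕ) : MeasurableSet (dI a p) := measurableSet_Ico

lemma volume_dI (a p : ℕ) : volume (dI a p) = ENNReal.ofReal (((2:ℝ)^a)⁻¹) := by
  rw [dI, Real.volume_Ico]
  congr 1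
  rw [div_sub_div_same]
  norm_num

lemma ind_mul_eq (s t : Set ℝ) :
    (fun x => s.indicator (1:ℝ→ℝ) x * t.indicator (1:ℝ→ℝ) x) = (s ∩ t).indicator (1:ℝ→ℝ) :=
  funext fun x => by rw [Set.inter_indicator_one]; rfl

lemma integrable_dI_mul (a b p q : ℕ) :
    Integrable (fun x => (dI a p).indicator (1:ℝ→ℝ) x * (dI b q).indicator (1:ℝ→ℝ) x) := by
  rw [ind_mul_eq]
  rw [integrable_indicator_iff ((measurableSet_dI a p).inter (measurableSet_dI b q))]
  refine integrableOn_const (ne_of_lt ?_)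
  exact lt_of_le_of_lt (measure_mono Set.inter_subset_left)
    (by rw [volume_dI]; exact ENNReal.ofReal_lt_top)

lemma integral_dI (a p : ℕ) : ∫ x, (dI a p).indicator (1:ℝ→ℝ) x = ((2:ℝ)^a)⁻¹ := by
  rw [integral_indicator_one (measurableSet_dI a p), measureReal_def, volume_dI,
    ENNReal.toReal_ofReal (by positivity)]

lemma integral_dI_mul {a b : ℕ} (p q : ℕ) (h : a ≤ b) :
    ∫ x, (dI a p).indicator (1:ℝ→ℝ) x * (dI b q).indicator (1:ℝ→ℝ) x
      = if q / 2 ^ (b - a) = p then ((2:ℝ)^b)⁻¹ else 0 := by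
  rw [ind_mul_eq]
  split_ifs with hpq
  · rw [Set.inter_eq_self_of_subset_right (dI_subset h hpq)]
    exact integral_dI b q
  · rw [dI_disjoint h hpq]; simp

lemma haar1_mul_expand (k j k' j' : ℕ) (x : ℝ) : haar1 k j x * haar1 k' j' x =
    (dI (k+1) (2*j+1)).indicator (1:ℝ→ℝ) x * (dI (k'+1) (2*j'+1)).indicator (1:ℝ→ℝ) x
    - (dI (k+1) (2*j+1)).indicator (1:ℝ→ℝ) x * (dI (k'+1) (2*j')).indicator (1:ℝ→ℝ) x
    - (dI (k+1) (2*j)).indicator (1:ℝ→ℝ) x * (dI (k'+1) (2*j'+1)).indicator (1:ℝ→ℝ) x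
    + (dI (k+1) (2*j)).indicator (1:ℝ→ℝ) x * (dI (k'+1) (2*j')).indicator (1:ℝ→ℝ) x := by
  rw [haar1_eq, haar1_eq]; ring

lemma integral_comb {fA fB fC fD : ℝ → ℝ} (hA : Integrable fA) (hB : Integrable fB)
    (hC : Integrable fC) (hD : Integrable fD) :
    ∫ x, (fA x - fB x - fC x + fD x)
      = (∫ x, fA x) - (∫ x, fB x) - (∫ x, fC x) + (∫ x, fD x) := by
  have h1 : ∫ x, (fA x - fB x) = (∫ x, fA x) - ∫ x, fB x := integral_sub hA hB
  have h2 : ∫ x, (fA x - fB x - fC x) = (∫ x, (fA x - fB x)) - ∫ x, fC x :=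
    integral_sub (hA.sub hB) hC
  have h3 : ∫ x, (fA x - fB x - fC x + fD x) = (∫ x, (fA x - fB x - fC x)) + ∫ x, fD x :=
    integral_add ((hA.sub hB).sub hC) hD
  rw [h3, h2, h1]

lemma haar1_ortho_le {k k' : ℕ} (j j' : ℕ) (h : k ≤ k') :
    ∫ x, haar1 k j x * haar1 k' j' x
      = if k = k' ∧ j = j' then ((2:ℝ)^k)⁻¹ else 0 := by
  have hb : k + 1 ≤ k' + 1 := by omega
  simp_rw [haar1_mul_expand]
  rw [integral_comb (integrable_dI_mul _ _ _ _) (integrable_dI_mul _ _ _ _)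
      (integrable_dI_mul _ _ _ _) (integrable_dI_mul _ _ _ _),
    integral_dI_mul _ _ hb, integral_dI_mul _ _ hb, integral_dI_mul _ _ hb,
    integral_dI_mul _ _ hb]
  rcases Nat.eq_or_lt_of_le h with hkk | hkk
  · subst hkk
    simp only [Nat.sub_self, pow_zero, Nat.div_one]
    by_cases hjj : j = j'
    · subst hjj
      rw [if_pos rfl, if_neg (show ¬(2*j = 2*j+1) by omega),
        if_neg (show ¬(2*j+1 = 2*j) by omega), if_pos rfl, if_pos (show True ∧ j = j from ⟨trivial, rfl⟩)]
      rw [pow_succ]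
      field_simp
      ring
    · rw [if_neg (show ¬(2*j'+1 = 2*j+1) by omega), if_neg (show ¬(2*j' = 2*j+1) by omega),
        if_neg (show ¬(2*j'+1 = 2*j) by omega), if_neg (show ¬(2*j' = 2*j) by omega),
        if_neg (show ¬(True ∧ j = j') from fun hc => hjj hc.2)]
      ring
  · have key : ∀ u : ℕ, u / 2 ^ (k' + 1 - (k + 1)) = (u / 2) / 2 ^ (k' - k - 1) := by
      intro u
      rw [show k' + 1 - (k + 1) = (k' - k - 1) + 1 by omega, pow_succ']
      rw [← Nat.div_div_eq_div_mul]
    rw [key (2*j'+1), key (2*j'), show (2*j'+1)/2 = j' by omega, show (2*j')/2 = j' by omega,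
      if_neg (show ¬(k = k' ∧ j = j') from fun hc => absurd hc.1 (Nat.ne_of_lt hkk))]
    ring

lemma haar1_ortho (k j k' j' : ℕ) :
    ∫ x, haar1 k j x * haar1 k' j' x
      = if k = k' ∧ j = j' then ((2:ℝ)^k)⁻¹ else 0 := by
  rcases le_total k k' with h | h
  · exact haar1_ortho_le j j' h
  · have h2 := haar1_ortho_le j' j h
    simp_rw [mul_comm (haar1 k' j' _)] at h2
    rw [h2]
    by_cases hkk : k = k' ∧ j = j'
    · rw [if_pos ⟨hkk.1.symm, hkk.2.symm⟩, if_pos hkk, hkk.1]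
    · rw [if_neg (fun hc => hkk ⟨hc.1.symm, hc.2.symm⟩), if_neg hkk]

lemma integrable_haar1_mul (k j k' j' : ℕ) :
    Integrable (fun x => haar1 k j x * haar1 k' j' x) := by
  simp_rw [haar1_mul_expand]
  exact (((integrable_dI_mul _ _ _ _).sub (integrable_dI_mul _ _ _ _)).sub
      (integrable_dI_mul _ _ _ _)).add (integrable_dI_mul _ _ _ _)

lemma measurable_haar1 (k j : ℕ) : Measurable (haar1 k j) := by
  unfold haar1
  refine Measurable.ite ?_ measurable_const (Measurable.ite ?_ measurable_const measurable_const)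
  · exact measurableSet_Ico
  · exact measurableSet_Ico

lemma abs_haar1_le (k j : ℕ) (x : ℝ) : |haar1 k j x| ≤ 1 := by
  unfold haar1; split_ifs <;> norm_num

lemma haar1_eq_zero {k j : ℕ} (hj : j < 2 ^ k) {x : ℝ} (hx : x ∉ Set.Icc (0:ℝ) 1) :
    haar1 k j x = 0 := by
  have h2k : (0:ℝ) < 2 ^ k := by positivity
  have hb : ((j:ℝ) + 1) / 2 ^ k ≤ 1 := by
    rw [div_le_one h2k]
    have : (j:ℝ) + 1 ≤ 2 ^ k := by exact_mod_cast Nat.succ_le_of_lt hj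
    linarith
  have ha : (0:ℝ) ≤ (j:ℝ) / 2 ^ k := by positivity
  have hmid : ((j:ℝ) + 1/2) / 2 ^ k ≤ ((j:ℝ) + 1) / 2 ^ k := by
    rw [div_le_div_iff₀ h2k h2k]; nlinarith
  have hmid0 : (0:ℝ) ≤ ((j:ℝ) + 1/2) / 2 ^ k := by positivity
  rw [Set.mem_Icc, not_and_or, not_le, not_le] at hx
  unfold haar1
  split_ifs with h1 h2
  · exfalso; rcases hx with hx | hx <;> linarith [h1.1, h1.2]
  · exfalso; rcases hx with hx | hx <;> linarith [h2.1, h2.2]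
  · rfl

lemma measurable_haarR {d : ℕ} (R : (Fin d → ℕ) × (Fin d → ℕ)) : Measurable (haarR R) := by
  unfold haarR
  exact Finset.measurable_prod _ fun i _ => (measurable_haar1 _ _).comp (measurable_pi_apply i)

lemma abs_haarR_le {d : ℕ} (R : (Fin d → ℕ) × (Fin d → ℕ)) (x : Fin d → ℝ) :
    |haarR R x| ≤ 1 := by
  unfold haarR
  rw [Finset.abs_prod]
  exact Finset.prod_le_one (fun i _ => abs_nonneg _) (fun i _ => abs_haar1_le _ _ _)

lemma haarR_eq_zero {d : ℕ} {R : (Fin d → ℕ) × (Fin d → ℕ)}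
    (hR : ∀ i, R.2 i < 2 ^ R.1 i) {x : Fin d → ℝ} (hx : x ∉ unitCube d) :
    haarR R x = 0 := by
  rw [unitCube, Set.mem_pi] at hx
  push_neg at hx
  obtain ⟨i, -, hi⟩ := hx
  exact Finset.prod_eq_zero (Finset.mem_univ i) (haar1_eq_zero (hR i) hi)

lemma volume_unitCube (d : ℕ) : volume (unitCube d) = 1 := by
  rw [unitCube, volume_pi_pi]
  simp [Real.volume_Icc]

instance vcube_finite (d : ℕ) : IsFiniteMeasure (volume.restrict (unitCube d)) := by
  constructor
  rw [Measure.restrict_apply_univ, volume_unitCube]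
  exact ENNReal.one_lt_top

lemma integral_cube_haarR_mul {d : ℕ} (R S : (Fin d → ℕ) × (Fin d → ℕ))
    (hR : ∀ i, R.2 i < 2 ^ R.1 i) (hS : ∀ i, S.2 i < 2 ^ S.1 i) :
    ∫ x in unitCube d, haarR R x * haarR S x
      = if R = S then ((2:ℝ) ^ (∑ i, R.1 i))⁻¹ else 0 := by
  rw [setIntegral_eq_integral_of_forall_compl_eq_zero
    (fun x hx => by rw [haarR_eq_zero hR hx, zero_mul])]
  have hfun : (fun x : Fin d → ℝ => haarR R x * haarR S x)
      = fun x => ∏ i, (fun t => haar1 (R.1 i) (R.2 i) t * haar1 (S.1 i) (S.2 i) t) (x i) :=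
    funext fun x => (Finset.prod_mul_distrib).symm
  rw [hfun, MeasureTheory.integral_fintype_prod_volume_eq_prod
    (fun i t => haar1 (R.1 i) (R.2 i) t * haar1 (S.1 i) (S.2 i) t)]
  simp_rw [haar1_ortho]
  by_cases hRS : R = S
  · subst hRS
    rw [if_pos rfl]
    simp only [and_self, if_pos, eq_self_iff_true, if_true]
    rw [← Finset.prod_pow_eq_pow_sum, ← Finset.prod_inv_distrib]
  · rw [if_neg hRS]
    have : ∃ i, ¬(R.1 i = S.1 i ∧ R.2 i = S.2 i) := by
      by_contra hco
      push_neg at hco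
      exact hRS (Prod.ext (funext fun i => (hco i).1) (funext fun i => (hco i).2))
    obtain ⟨i, hi⟩ := this
    exact Finset.prod_eq_zero (Finset.mem_univ i) (if_neg hi)

lemma rectsEq_subset (d n : ℕ) : rectsEq d n ⊆ rectsGe d n := by
  intro R hR
  rw [rectsEq, Finset.mem_filter] at hR
  rw [rectsGe, Finset.mem_filter]
  exact ⟨hR.1, le_of_eq hR.2.1, hR.2.2⟩

lemma mem_rectsGe_valid {d n : ℕ} {R : (Fin d → ℕ) × (Fin d → ℕ)} (h : R ∈ rectsGe d n) :
    ∀ i, R.2 i < 2 ^ R.1 i := by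
  rw [rectsGe, Finset.mem_filter] at h
  exact h.2.2

lemma integrable_haarR_mul {d n : ℕ} (R S : (Fin d → ℕ) × (Fin d → ℕ)) :
    Integrable (fun x => haarR R x * haarR S x) (volume.restrict (unitCube d)) := by
  refine Integrable.mono' (integrable_const 1)
    (((measurable_haarR R).mul (measurable_haarR S)).aestronglyMeasurable) ?_
  filter_upwards with x
  rw [Real.norm_eq_abs, abs_mul]
  exact mul_le_one₀ (abs_haarR_le R x) (abs_nonneg _) (abs_haarR_le S x)

lemma integral_sq {d n : ℕ} (α : ((Fin d → ℕ) × (Fin d → ℕ)) → ℝ) :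
    ∫ x in unitCube d, (∑ R ∈ rectsGe d n, α R * haarR R x) ^ 2
      = ∑ R ∈ rectsGe d n, (α R) ^ 2 * ((2:ℝ) ^ (∑ i, R.1 i))⁻¹ := by
  have hexp : ∀ x, (∑ R ∈ rectsGe d n, α R * haarR R x) ^ 2
      = ∑ R ∈ rectsGe d n, ∑ S ∈ rectsGe d n, (α R * α S) * (haarR R x * haarR S x) := by
    intro x
    rw [sq, Finset.sum_mul_sum]
    exact Finset.sum_congr rfl fun R _ => Finset.sum_congr rfl fun S _ => by ring
  simp_rw [hexp]
  rw [integral_finset_sum _ (fun R _ => integrable_finset_sum _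
    (fun S _ => ((integrable_haarR_mul (n := n) R S).const_mul _)))]
  refine Finset.sum_congr rfl fun R hR => ?_
  rw [integral_finset_sum _ (fun S _ => ((integrable_haarR_mul (n := n) R S).const_mul _))]
  have : ∀ S ∈ rectsGe d n, ∫ x in unitCube d, (α R * α S) * (haarR R x * haarR S x)
      = if R = S then (α R * α S) * ((2:ℝ) ^ (∑ i, R.1 i))⁻¹ else 0 := by
    intro S hS
    rw [integral_const_mul, integral_cube_haarR_mul R S
      (mem_rectsGe_valid hR) (mem_rectsGe_valid hS), mul_ite, mul_zero]
  rw [Finset.sum_congr rfl this, Finset.sum_ite_eq (rectsGe d n) R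
    (fun S => (α R * α S) * ((2:ℝ) ^ (∑ i, R.1 i))⁻¹), if_pos hR]
  ring

lemma card_levels (e n : ℕ) :
    ((Fintype.piFinset fun _ : Fin (e+1) => Finset.range (n + 1)).filter
      (fun k => (∑ i, k i) = n)).card ≤ (n + 1) ^ e := by
  have := Finset.card_le_card_of_injOn
    (s := (Fintype.piFinset fun _ : Fin (e+1) => Finset.range (n + 1)).filter
      (fun k => (∑ i, k i) = n))
    (f := fun (k : Fin (e+1) → ℕ) => fun i : Fin e => k i.succ)
    (t := Fintype.piFinset fun _ : Fin e => Finset.range (n + 1))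
    (fun k hk => by
      rw [Finset.mem_coe, Finset.mem_filter, Fintype.mem_piFinset] at hk
      rw [Finset.mem_coe, Fintype.mem_piFinset]
      exact fun i => hk.1 i.succ)
    (fun k hk k' hk' hkk => by
      rw [Finset.mem_coe, Finset.mem_filter] at hk hk'
      have hs : ∑ i, k i = ∑ i, k' i := by rw [hk.2, hk'.2]
      rw [Fin.sum_univ_succ, Fin.sum_univ_succ] at hs
      have htail : ∀ i : Fin e, k i.succ = k' i.succ := fun i => congrFun hkk i
      have hsum : ∑ i : Fin e, k i.succ = ∑ i : Fin e, k' i.succ :=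
        Finset.sum_congr rfl fun i _ => htail i
      have h0 : k 0 = k' 0 := by omega
      funext m
      refine Fin.cases h0 (fun i => htail i) m)
  calc _ ≤ (Fintype.piFinset fun _ : Fin e => Finset.range (n + 1)).card := this
    _ = (n + 1) ^ e := by
        rw [Fintype.card_piFinset]
        simp [Finset.card_range]

lemma card_rectsEq (e n : ℕ) : (rectsEq (e+1) n).card ≤ (n + 1) ^ e * 2 ^ n := by
  classical
  rw [rectsEq, Finset.card_filter, Finset.sum_product]
  have step1 : ∀ k : Fin (e+1) → ℕ,
      (∑ j ∈ Fintype.piFinset fun _ : Fin (e+1) => Finset.range (2 ^ n),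
        if (∑ i, k i) = n ∧ ∀ i, j i < 2 ^ k i then 1 else 0)
      = if (∑ i, k i) = n then
          ((Fintype.piFinset fun _ : Fin (e+1) => Finset.range (2 ^ n)).filter
            (fun j => ∀ i, j i < 2 ^ k i)).card else 0 := by
    intro k
    split_ifs with hk
    · rw [Finset.card_filter]
      refine Finset.sum_congr rfl fun j _ => by simp [hk]
    · refine Finset.sum_eq_zero fun j _ => by simp [hk]
  rw [Finset.sum_congr rfl fun k _ => step1 k]
  have step2 : ∀ k : Fin (e+1) → ℕ, (∑ i, k i) = n →
      ((Fintype.piFinset fun _ : Fin (e+1) => Finset.range (2 ^ n)).filter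
        (fun j => ∀ i, j i < 2 ^ k i)).card = 2 ^ n := by
    intro k hk
    have hset : (Fintype.piFinset fun _ : Fin (e+1) => Finset.range (2 ^ n)).filter
        (fun j => ∀ i, j i < 2 ^ k i) = Fintype.piFinset fun i => Finset.range (2 ^ k i) := by
      ext j
      rw [Finset.mem_filter, Fintype.mem_piFinset, Fintype.mem_piFinset]
      simp only [Finset.mem_range]
      constructor
      · exact fun h => h.2
      · intro h
        refine ⟨fun i => lt_of_lt_of_le (h i) (Nat.pow_le_pow_right (by norm_num) ?_), h⟩
        calc k i ≤ ∑ m, k m := Finset.single_le_sum (fun m _ => Nat.zero_le _) (Finset.mem_univ i)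
          _ = n := hk
    rw [hset, Fintype.card_piFinset]
    simp only [Finset.card_range]
    rw [Finset.prod_pow_eq_pow_sum, hk]
  calc (∑ k ∈ Fintype.piFinset fun _ : Fin (e+1) => Finset.range (n + 1),
        if (∑ i, k i) = n then
          ((Fintype.piFinset fun _ : Fin (e+1) => Finset.range (2 ^ n)).filter
            (fun j => ∀ i, j i < 2 ^ k i)).card else 0)
      = ∑ k ∈ Fintype.piFinset fun _ : Fin (e+1) => Finset.range (n + 1),
          if (∑ i, k i) = n then 2 ^ n else 0 := by
        refine Finset.sum_congr rfl fun k _ => ?_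
        split_ifs with hk
        · rw [step2 k hk]
        · rfl
    _ = ((Fintype.piFinset fun _ : Fin (e+1) => Finset.range (n + 1)).filter
          (fun k => (∑ i, k i) = n)).card * 2 ^ n := by
        rw [← Finset.sum_filter, Finset.sum_const, smul_eq_mul]
    _ ≤ (n + 1) ^ e * 2 ^ n := Nat.mul_le_mul_right _ (card_levels e n)

lemma mem_rectsEq_sum {d n : ℕ} {R : (Fin d → ℕ) × (Fin d → ℕ)} (h : R ∈ rectsEq d n) :
    (∑ i, R.1 i) = n := by
  rw [rectsEq, Finset.mem_filter] at h
  exact h.2.1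

/-- **The "trivial" bound (Lemma 2.1): Cauchy–Schwarz estimate in dimension `d`.** -/
theorem trivial_hyperbolic_bound (d : ℕ) (hd : 2 ≤ d) :
    ∃ C : ℝ, 0 < C ∧ ∀ n : ℕ, 1 ≤ n → ∀ α : ((Fin d → ℕ) × (Fin d → ℕ)) → ℝ,
      ENNReal.ofReal (∑ R ∈ rectsEq d n, |α R| * (2 : ℝ) ^ (-((∑ i, R.1 i : ℕ) : ℝ))) ≤
        ENNReal.ofReal (C * (n : ℝ) ^ (((d : ℝ) - 1) / 2)) *
          eLpNorm (fun x => ∑ R ∈ rectsGe d n, α R * haarR R x) ⊤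
            (volume.restrict (unitCube d)) := by
  obtain ⟨e, rfl⟩ : ∃ e, d = e + 1 := ⟨d - 1, by omega⟩
  have he : 1 ≤ e := by omega
  refine ⟨(2:ℝ) ^ ((e:ℝ)/2), Real.rpow_pos_of_pos (by norm_num) _, ?_⟩
  intro n hn α
  have hexp2 : (((e+1:ℕ):ℝ) - 1) / 2 = (e:ℝ)/2 := by push_cast; ring
  have hn1 : (1:ℝ) ≤ (n:ℝ) := by exact_mod_cast hn
  set μ := volume.restrict (unitCube (e+1)) with hμ
  set f : (Fin (e+1) → ℝ) → ℝ := fun x => ∑ R ∈ rectsGe (e+1) n, α R * haarR R x with hf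
  set M := eLpNorm f ⊤ μ with hM
  have hpos : 0 < (2:ℝ) ^ ((e:ℝ)/2) * (n:ℝ) ^ (((((e+1:ℕ)):ℝ) - 1) / 2) := by
    apply mul_pos (Real.rpow_pos_of_pos (by norm_num) _)
    exact Real.rpow_pos_of_pos (by linarith) _
  by_cases hMtop : M = ⊤
  · rw [hMtop, ENNReal.mul_top (ENNReal.ofReal_pos.2 hpos).ne']
    exact le_top
  -- main case
  have hμuniv : μ Set.univ = 1 := by
    rw [hμ, Measure.restrict_apply_univ, volume_unitCube]
  have hMr0 : 0 ≤ M.toReal := ENNReal.toReal_nonneg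
  have hae : ∀ᵐ x ∂μ, |f x| ≤ M.toReal := by
    have h1 : ∀ᵐ x ∂μ, (‖f x‖₊ : ℝ≥0∞) ≤ M := by
      rw [hM, eLpNorm_exponent_top]
      exact ae_le_eLpNormEssSup
    filter_upwards [h1] with x hx
    have h2 := ENNReal.toReal_mono hMtop hx
    rwa [ENNReal.coe_toReal, coe_nnnorm, Real.norm_eq_abs] at h2
  have hfm : Measurable f := Finset.measurable_sum _ fun R _ => (measurable_haarR R).const_mul _
  have hfb : ∀ x, |f x| ≤ ∑ R ∈ rectsGe (e+1) n, |α R| := by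
    intro x
    refine le_trans (Finset.abs_sum_le_sum_abs _ _) (Finset.sum_le_sum fun R _ => ?_)
    rw [abs_mul]
    exact mul_le_of_le_one_right (abs_nonneg _) (abs_haarR_le R x)
  have hint1 : Integrable (fun x => f x ^ 2) μ := by
    refine Integrable.mono' (integrable_const ((∑ R ∈ rectsGe (e+1) n, |α R|) ^ 2))
      ((hfm.pow_const 2).aestronglyMeasurable) ?_
    filter_upwards with x
    rw [Real.norm_eq_abs, abs_pow]
    exact pow_le_pow_left₀ (abs_nonneg _) (hfb x) 2
  have hsq : ∫ x, f x ^ 2 ∂μ ≤ M.toReal ^ 2 := by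
    have h3 := integral_mono_ae hint1 (integrable_const (M.toReal ^ 2))
      (hae.mono fun x hx => by
        show f x ^ 2 ≤ M.toReal ^ 2
        nlinarith [abs_nonneg (f x), sq_abs (f x)])
    rwa [integral_const, measureReal_def, hμuniv, ENNReal.toReal_one, one_smul] at h3
  set w : ℝ := ((2:ℝ)^n)⁻¹ with hwdef
  have hw : 0 ≤ w := by positivity
  have hS2 : ∑ R ∈ rectsEq (e+1) n, (α R)^2 * w ≤ M.toReal^2 := by
    calc ∑ R ∈ rectsEq (e+1) n, (α R)^2 * w
        = ∑ R ∈ rectsEq (e+1) n, (α R)^2 * ((2:ℝ) ^ (∑ i, R.1 i))⁻¹ :=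
          Finset.sum_congr rfl fun R hR => by rw [mem_rectsEq_sum hR]
      _ ≤ ∑ R ∈ rectsGe (e+1) n, (α R)^2 * ((2:ℝ) ^ (∑ i, R.1 i))⁻¹ :=
          Finset.sum_le_sum_of_subset_of_nonneg (rectsEq_subset _ _)
            (fun R _ _ => by positivity)
      _ = ∫ x, f x ^ 2 ∂μ := (integral_sq α).symm
      _ ≤ M.toReal ^ 2 := hsq
  set S1 : ℝ := ∑ R ∈ rectsEq (e+1) n, |α R| * w with hS1def
  have hS1nn : 0 ≤ S1 := Finset.sum_nonneg fun R _ => by positivity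
  have hCS := Finset.sum_mul_sq_le_sq_mul_sq (rectsEq (e+1) n)
    (fun R => |α R| * Real.sqrt w) (fun R => Real.sqrt w)
  have hCS' : S1 ^ 2 ≤ (∑ R ∈ rectsEq (e+1) n, (α R)^2 * w) *
      (((rectsEq (e+1) n).card : ℝ) * w) := by
    have e1 : ∀ R, (|α R| * Real.sqrt w) * Real.sqrt w = |α R| * w := fun R => by
      rw [mul_assoc, Real.mul_self_sqrt hw]
    have e2 : ∀ R, (|α R| * Real.sqrt w)^2 = (α R)^2 * w := fun R => by
      rw [mul_pow, sq_abs, Real.sq_sqrt hw]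
    have e3 : (Real.sqrt w)^2 = w := Real.sq_sqrt hw
    simp only [e1, e2, e3, Finset.sum_const, nsmul_eq_mul] at hCS
    exact hCS
  set X : ℝ := (2*(n:ℝ)) ^ ((e:ℝ)/2) with hXdef
  have hXnn : 0 ≤ X := Real.rpow_nonneg (by linarith) _
  have hX2 : X ^ 2 = (2*(n:ℝ)) ^ e := by
    rw [hXdef, ← Real.rpow_natCast ((2*(n:ℝ)) ^ ((e:ℝ)/2)) 2, ← Real.rpow_mul (by linarith)]
    rw [show (e:ℝ)/2 * ((2:ℕ):ℝ) = ((e:ℕ):ℝ) by push_cast; ring, Real.rpow_natCast]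
  have hcard : (((rectsEq (e+1) n).card : ℝ) * w) ≤ ((n:ℝ)+1)^e := by
    have h4 : ((rectsEq (e+1) n).card : ℝ) ≤ ((n+1)^e * 2^n : ℕ) := by
      exact_mod_cast card_rectsEq e n
    have h5 : (((n+1)^e * 2^n : ℕ) : ℝ) * w = ((n:ℝ)+1)^e := by
      push_cast
      rw [hwdef]
      field_simp
    calc ((rectsEq (e+1) n).card : ℝ) * w ≤ (((n+1)^e * 2^n : ℕ) : ℝ) * w :=
          mul_le_mul_of_nonneg_right h4 hw
      _ = ((n:ℝ)+1)^e := h5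
  have hfinal : S1 ≤ M.toReal * X := by
    have h6 : S1^2 ≤ (M.toReal * X)^2 := by
      rw [mul_pow, hX2]
      calc S1^2 ≤ (∑ R ∈ rectsEq (e+1) n, (α R)^2 * w) *
          (((rectsEq (e+1) n).card : ℝ) * w) := hCS'
        _ ≤ M.toReal^2 * (((n:ℝ)+1)^e) := by
            apply mul_le_mul hS2 hcard (by positivity) (by positivity)
        _ ≤ M.toReal^2 * ((2*(n:ℝ))^e) := by
            apply mul_le_mul_of_nonneg_left (pow_le_pow_left₀ (by positivity) (by linarith) e)
              (by positivity)
    calc S1 = Real.sqrt (S1^2) := (Real.sqrt_sq hS1nn).symm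
      _ ≤ Real.sqrt ((M.toReal * X)^2) := Real.sqrt_le_sqrt h6
      _ = M.toReal * X := Real.sqrt_sq (by positivity)
  have hLHS : ∑ R ∈ rectsEq (e+1) n, |α R| * (2:ℝ) ^ (-((∑ i, R.1 i : ℕ) : ℝ)) = S1 := by
    refine Finset.sum_congr rfl fun R hR => ?_
    rw [mem_rectsEq_sum hR, Real.rpow_neg (by norm_num), Real.rpow_natCast]
  have hCnp : (2:ℝ) ^ ((e:ℝ)/2) * (n:ℝ) ^ (((((e+1:ℕ)):ℝ) - 1) / 2) = X := by
    rw [hexp2, hXdef, Real.mul_rpow (by norm_num) (by linarith)]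
  rw [hLHS, ← ENNReal.ofReal_toReal hMtop, ← ENNReal.ofReal_mul (by positivity)]
  apply ENNReal.ofReal_le_ofReal
  calc S1 ≤ M.toReal * X := hfinal
    _ = (2:ℝ) ^ ((e:ℝ)/2) * (n:ℝ) ^ (((((e+1:ℕ)):ℝ) - 1) / 2) * M.toReal := by
        rw [hCnp]; ring
end

section
/- Let d ≥ 1 and let R_1, …, R_k ⊂ [0,1]^d be dyadic rectangles such that for every pair 1 ≤ j < j' ≤ k and every coordinate 1 ≤ t ≤ d, the side intervals satisfy R_{j,t} ≠ R_{j',t}. Set S := ∩_{j=1}^k R_j. If S is empty, then ∏_{j=1}^k h_{R_j} is identically zero; if S is nonempty, then S is a dyadic rectangle and ∏_{j=1}^k h_{R_j} = ε h_S for some sign ε ∈ {±1}. -/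
open MeasureTheory
open scoped ENNReal Classical

/-- `R` encodes a genuine dyadic rectangle: each position is below `2 ^ level`. -/
def ValidR {d : ℕ} (R : (Fin d → ℕ) × (Fin d → ℕ)) : Prop :=
  ∀ i, R.2 i < 2 ^ R.1 i

/-- The dyadic rectangle (as a subset of `ℝ^d`) encoded by levels `R.1` and positions `R.2`. -/
def rectSet {d : ℕ} (R : (Fin d → ℕ) × (Fin d → ℕ)) : Set (Fin d → ℝ) :=
  {x | ∀ i, (R.2 i : ℝ) / 2 ^ R.1 i ≤ x i ∧ x i < ((R.2 i : ℝ) + 1) / 2 ^ R.1 i}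

/-- Membership in a dyadic interval is a floor condition. -/
lemma mem_iff_floor (k a : ℕ) (y : ℝ) :
    ((a:ℝ)/2^k ≤ y ∧ y < ((a:ℝ)+1)/2^k) ↔ ⌊y * 2^k⌋ = (a:ℤ) := by
  have h2 : (0:ℝ) < 2^k := by positivity
  rw [Int.floor_eq_iff, div_le_iff₀ h2, lt_div_iff₀ h2]
  push_cast
  constructor <;> rintro ⟨h1, h3⟩ <;>
    exact ⟨by nlinarith, by nlinarith⟩

/-- The floor at a coarser level is constant on a finer dyadic interval. -/
lemma floor_in (k l b : ℕ) (hkl : k ≤ l) (y : ℝ)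
    (hy : (b:ℝ)/2^l ≤ y ∧ y < ((b:ℝ)+1)/2^l) :
    ⌊y * 2^k⌋ = ((b / 2^(l-k) : ℕ) : ℤ) := by
  set m := l - k with hm'
  have hlm : l = k + m := by omega
  have h2m : (0:ℝ) < 2^m := by positivity
  have h2k : (0:ℝ) < 2^k := by positivity
  have h2l_eq : (2:ℝ)^l = 2^k * 2^m := by rw [hlm, pow_add]
  set c := b / 2^m with hc
  have hb1 : (c:ℝ) * 2^m ≤ b := by exact_mod_cast Nat.div_mul_le_self b (2^m)
  have hb2 : (b:ℝ) + 1 ≤ ((c:ℝ) + 1) * 2^m := by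
    have hmod : b % 2^m < 2^m := Nat.mod_lt _ (Nat.pow_pos (by norm_num))
    have hlt : b < (c + 1) * 2^m := by
      calc b = 2^m * c + b % 2^m := by rw [hc]; exact (Nat.div_add_mod b (2^m)).symm
        _ < 2^m * c + 2^m := Nat.add_lt_add_left hmod _
        _ = (c + 1) * 2^m := by ring
    exact_mod_cast Nat.succ_le_of_lt hlt
  rw [Int.floor_eq_iff]
  push_cast
  constructor
  · have h1 := mul_le_mul_of_nonneg_right hy.1 (le_of_lt h2k)
    rw [h2l_eq] at h1
    have : (b:ℝ) / (2^k * 2^m) * 2^k = b / 2^m := by field_simp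
    rw [this] at h1
    calc (c:ℝ) ≤ (b:ℝ)/2^m := by rw [le_div_iff₀ h2m]; exact hb1
      _ ≤ y * 2^k := h1
  · have h1 := mul_lt_mul_of_pos_right hy.2 h2k
    rw [h2l_eq] at h1
    have : ((b:ℝ)+1) / (2^k * 2^m) * 2^k = ((b:ℝ)+1) / 2^m := by field_simp
    rw [this] at h1
    calc y * 2^k < ((b:ℝ)+1)/2^m := h1
      _ ≤ (c:ℝ) + 1 := by rw [div_le_iff₀ h2m]; exact hb2

/-- The value of `haar1` as a function of a floor. -/
noncomputable def hv (a : ℕ) (n : ℤ) : ℝ :=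
  if n = 2*(a:ℤ) then -1 else if n = 2*(a:ℤ)+1 then 1 else 0

lemma haar1_eq_s6 (k a : ℕ) (y : ℝ) : haar1 k a y = hv a ⌊y * 2^(k+1)⌋ := by
  have h2k : (0:ℝ) < 2^k := by positivity
  have e1 : ((2*a:ℕ):ℝ)/2^(k+1) = (a:ℝ)/2^k := by
    push_cast; rw [pow_succ]; field_simp
  have e2 : (((2*a:ℕ):ℝ)+1)/2^(k+1) = ((a:ℝ)+1/2)/2^k := by
    push_cast; rw [pow_succ]; field_simp
  have e3 : (((2*a+1:ℕ):ℝ))/2^(k+1) = ((a:ℝ)+1/2)/2^k := by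
    push_cast; rw [pow_succ]; field_simp
  have e4 : (((2*a+1:ℕ):ℝ)+1)/2^(k+1) = ((a:ℝ)+1)/2^k := by
    push_cast; rw [pow_succ]; field_simp; ring
  have key1 : ((a:ℝ)/2^k ≤ y ∧ y < ((a:ℝ)+1/2)/2^k) ↔ ⌊y*2^(k+1)⌋ = 2*(a:ℤ) := by
    have := mem_iff_floor (k+1) (2*a) y
    rw [e1, e2] at this
    rw [this]; push_cast; rfl
  have key2 : (((a:ℝ)+1/2)/2^k ≤ y ∧ y < ((a:ℝ)+1)/2^k) ↔ ⌊y*2^(k+1)⌋ = 2*(a:ℤ)+1 := by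
    have := mem_iff_floor (k+1) (2*a+1) y
    rw [e3, e4] at this
    rw [this]; push_cast; rfl
  unfold haar1 hv
  exact if_congr key1 rfl (if_congr key2 rfl rfl)

/-- `haar1` vanishes outside the interval. -/
lemma haar1_out (k a : ℕ) (y : ℝ)
    (h : ¬((a:ℝ)/2^k ≤ y ∧ y < ((a:ℝ)+1)/2^k)) : haar1 k a y = 0 := by
  have h2 : (0:ℝ) < 2^k := by positivity
  unfold haar1
  split_ifs with h1 h3
  · exact absurd ⟨h1.1, lt_of_lt_of_le h1.2 ((div_le_div_iff_of_pos_right h2).mpr (by linarith))⟩ h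
  · exact absurd ⟨le_trans ((div_le_div_iff_of_pos_right h2).mpr (by linarith)) h3.1, h3.2⟩ h
  · rfl

/-- `haar1` is `±1` inside the interval. -/
lemma haar1_in (k a : ℕ) (y : ℝ)
    (h : (a:ℝ)/2^k ≤ y ∧ y < ((a:ℝ)+1)/2^k) :
    haar1 k a y = 1 ∨ haar1 k a y = -1 := by
  unfold haar1
  rcases lt_or_ge y (((a:ℝ)+1/2)/2^k) with hy | hy
  · rw [if_pos ⟨h.1, hy⟩]; right; rfl
  · rw [if_neg (by rintro ⟨_, h'⟩; linarith), if_pos ⟨hy, h.2⟩]; left; rfl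

/-- One-dimensional product rule for Haar functions of distinct dyadic intervals
sharing a common point, with `m` an index of maximal level. -/
lemma one_dim (k : ℕ) (L P : Fin k → ℕ)
    (hdist : ∀ j j', j ≠ j' → ((L j : ℕ), (P j : ℕ)) ≠ (L j', P j'))
    (x₀ : ℝ) (hx₀ : ∀ j, (P j : ℝ)/2^(L j) ≤ x₀ ∧ x₀ < ((P j : ℝ)+1)/2^(L j))
    (m : Fin k) (hm : ∀ j, L j ≤ L m) :
    (∀ j y, ((P m : ℝ)/2^(L m) ≤ y ∧ y < ((P m:ℝ)+1)/2^(L m)) →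
       ((P j : ℝ)/2^(L j) ≤ y ∧ y < ((P j:ℝ)+1)/2^(L j))) ∧
    ∃ ε : ℝ, (ε = 1 ∨ ε = -1) ∧
      ∀ y, ∏ j, haar1 (L j) (P j) y = ε * haar1 (L m) (P m) y := by
  -- floors on the small interval
  have hfloor : ∀ j y, ((P m : ℝ)/2^(L m) ≤ y ∧ y < ((P m:ℝ)+1)/2^(L m)) →
      ⌊y * 2^(L j)⌋ = (P j : ℤ) := by
    intro j y hy
    rw [floor_in (L j) (L m) (P m) (hm j) y hy,
      ← floor_in (L j) (L m) (P m) (hm j) x₀ (hx₀ m),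
      (mem_iff_floor (L j) (P j) x₀).mp (hx₀ j)]
  have hincl : ∀ j y, ((P m : ℝ)/2^(L m) ≤ y ∧ y < ((P m:ℝ)+1)/2^(L m)) →
      ((P j : ℝ)/2^(L j) ≤ y ∧ y < ((P j:ℝ)+1)/2^(L j)) := by
    intro j y hy
    exact (mem_iff_floor (L j) (P j) y).mpr (hfloor j y hy)
  refine ⟨hincl, ?_⟩
  -- strict level inequality for j ≠ m
  have hlt : ∀ j, j ≠ m → L j < L m := by
    intro j hj
    rcases lt_or_eq_of_le (hm j) with h | h
    · exact h
    · exfalso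
      apply hdist j m hj
      have h1 : (⌊x₀ * 2^(L j)⌋ : ℤ) = (P j : ℤ) := (mem_iff_floor _ _ x₀).mp (hx₀ j)
      have h2 : (⌊x₀ * 2^(L m)⌋ : ℤ) = (P m : ℤ) := (mem_iff_floor _ _ x₀).mp (hx₀ m)
      rw [h] at h1
      rw [h1] at h2
      have : P j = P m := by exact_mod_cast h2
      rw [h, this]
  -- constancy of the big Haar functions on the small interval
  have hconst : ∀ j, j ≠ m → ∀ y, ((P m : ℝ)/2^(L m) ≤ y ∧ y < ((P m:ℝ)+1)/2^(L m)) →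
      haar1 (L j) (P j) y = haar1 (L j) (P j) x₀ := by
    intro j hj y hy
    have hlj : L j + 1 ≤ L m := hlt j hj
    rw [haar1_eq_s6, haar1_eq_s6,
      floor_in (L j + 1) (L m) (P m) hlj y hy,
      floor_in (L j + 1) (L m) (P m) hlj x₀ (hx₀ m)]
  refine ⟨∏ j ∈ Finset.univ.erase m, haar1 (L j) (P j) x₀, ?_, ?_⟩
  · refine Finset.prod_induction _ (fun x => x = 1 ∨ x = -1) ?_ (Or.inl rfl) ?_
    · rintro a b (rfl|rfl) (rfl|rfl) <;> norm_num
    · intro j _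
      exact haar1_in (L j) (P j) x₀ (hx₀ j)
  · intro y
    by_cases hy : ((P m : ℝ)/2^(L m) ≤ y ∧ y < ((P m:ℝ)+1)/2^(L m))
    · rw [← Finset.mul_prod_erase Finset.univ _ (Finset.mem_univ m)]
      rw [Finset.prod_congr rfl (fun j hj => hconst j (Finset.mem_erase.mp hj).1 y hy)]
      ring
    · rw [haar1_out _ _ _ hy, mul_zero]
      exact Finset.prod_eq_zero (Finset.mem_univ m) (haar1_out _ _ _ hy)

/-- **Product rule in dimension `d` (Proposition 6.1).** If the rectangles `R 1, …, R k`
have pairwise distinct side intervals in every coordinate, then their Haar product is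
identically zero when `S = ⋂ R j` is empty, and equals `± h_S` when `S` is nonempty. -/
theorem product_rule_strongly_distinct (d : ℕ) (hd : 1 ≤ d) (k : ℕ) (hk : 1 ≤ k)
    (R : Fin k → (Fin d → ℕ) × (Fin d → ℕ)) (hR : ∀ j, ValidR (R j))
    (hdist : ∀ j j' : Fin k, j ≠ j' → ∀ t : Fin d,
      ((R j).1 t, (R j).2 t) ≠ ((R j').1 t, (R j').2 t)) :
    ((⋂ j, rectSet (R j)) = ∅ → ∀ x, (∏ j, haarR (R j) x) = 0) ∧
    ((⋂ j, rectSet (R j)).Nonempty →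
      ∃ S : (Fin d → ℕ) × (Fin d → ℕ), ValidR S ∧ rectSet S = ⋂ j, rectSet (R j) ∧
        ∃ ε : ℝ, (ε = 1 ∨ ε = -1) ∧ ∀ x, (∏ j, haarR (R j) x) = ε * haarR S x) := by
  constructor
  · intro hS x
    have hx : x ∉ ⋂ j, rectSet (R j) := by rw [hS]; exact Set.notMem_empty x
    rw [Set.mem_iInter] at hx
    push_neg at hx
    obtain ⟨j, hj⟩ := hx
    have hj' : ¬ ∀ i, ((R j).2 i : ℝ) / 2 ^ (R j).1 i ≤ x i ∧
        x i < (((R j).2 i : ℝ) + 1) / 2 ^ (R j).1 i := hj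
    obtain ⟨i, hi⟩ := not_forall.mp hj'
    refine Finset.prod_eq_zero (Finset.mem_univ j) ?_
    exact Finset.prod_eq_zero (Finset.mem_univ i) (haar1_out _ _ _ hi)
  · rintro ⟨x₀, hx₀⟩
    rw [Set.mem_iInter] at hx₀
    have hx₀' : ∀ j i, ((R j).2 i : ℝ)/2^((R j).1 i) ≤ x₀ i ∧
        x₀ i < (((R j).2 i:ℝ)+1)/2^((R j).1 i) := fun j i => hx₀ j i
    have hNe : Nonempty (Fin k) := ⟨⟨0, hk⟩⟩
    have hmex : ∀ i : Fin d, ∃ m : Fin k, ∀ j, (R j).1 i ≤ (R m).1 i :=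
      fun i => Finite.exists_max (fun j => (R j).1 i)
    choose m hmax using hmex
    have key := fun i : Fin d => one_dim k (fun j => (R j).1 i) (fun j => (R j).2 i)
      (fun j j' hne => hdist j j' hne i) (x₀ i) (fun j => hx₀' j i) (m i) (hmax i)
    refine ⟨(fun i => (R (m i)).1 i, fun i => (R (m i)).2 i), fun i => hR (m i) i, ?_, ?_⟩
    · ext x
      simp only [rectSet, Set.mem_setOf_eq, Set.mem_iInter]
      constructor
      · intro hx j i
        exact (key i).1 j (x i) (hx i)
      · intro hx i
        exact hx (m i) i
    · choose ε hε hprod using fun i => (key i).2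
      refine ⟨∏ i, ε i, ?_, ?_⟩
      · refine Finset.prod_induction _ (fun x => x = 1 ∨ x = -1) ?_ (Or.inl rfl) ?_
        · rintro a b (rfl|rfl) (rfl|rfl) <;> norm_num
        · intro i _
          exact hε i
      · intro x
        unfold haarR
        rw [Finset.prod_comm]
        rw [Finset.prod_congr rfl (fun i (_ : i ∈ Finset.univ) => hprod i (x i)),
          Finset.prod_mul_distrib]
end

section
/- Fix an integer n ≥ 1 and a sign ε_R ∈ {±1} for each dyadic rectangle R ⊂ [0,1]^2 with |R| = 2^{-n}. For 0 ≤ s ≤ n let ψ_s := Σ_{R : |R_1| = 2^{-s}, |R_2| = 2^{s−n}} ε_R h_R, and let Ψ := ∏_{s=0}^{n} (1 + ψ_s/2). Then: (i) Ψ(x) ≥ 0 for all x ∈ [0,1]^2; (ii) ∫_{[0,1]^2} Ψ dx = 1; and (iii) for every choice of real coefficients α(R) indexed by dyadic rectangles R ⊂ [0,1]^2 with |R| ≥ 2^{-n}, ∫_{[0,1]^2} ( Σ_{|R| ≥ 2^{-n}} α(R) h_R ) · Ψ dx = 2^{-n-1} Σ_{|R| = 2^{-n}} ε_R α(R). -/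
open MeasureTheory
open scoped ENNReal Classical

namespace RieszAux
open Finset

abbrev Rect : Type := (Fin 2 → ℕ) × (Fin 2 → ℕ)


noncomputable def Dq (j q : ℕ) : ℝ :=
  if q = 2*j then -1 else if q = 2*j+1 then 1 else 0

noncomputable def Dh (N k j c : ℕ) : ℝ := Dq j (c / 2^(N-k-1))

lemma Dq_mul_ne {j j' : ℕ} (h : j ≠ j') (q : ℕ) : Dq j q * Dq j' q = 0 := by
  unfold Dq; split_ifs <;> first | ring1 | (exfalso; omega)

lemma Dq_sq (j q : ℕ) : Dq j q * Dq j q = if q = 2*j ∨ q = 2*j+1 then 1 else 0 := by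
  unfold Dq; split_ifs <;> first | ring1 | (exfalso; omega)

lemma Dq_succ (j q : ℕ) : Dq j (2*q+1) = - Dq j (2*q) := by
  unfold Dq; split_ifs <;> first | ring1 | (exfalso; omega)

lemma div_iff {b : ℕ} (hb : 0 < b) {c t : ℕ} : c / b = t ↔ t*b ≤ c ∧ c < t*b + b := by
  constructor
  · rintro rfl
    refine ⟨Nat.div_mul_le_self c b, ?_⟩
    have h0 := Nat.div_add_mod c b
    have h1 := Nat.mod_lt c hb
    have h2 : c < b * (c / b) + b := by omega
    calc c < b * (c/b) + b := h2
      _ = c/b*b + b := by ring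
  · rintro ⟨h1, h2⟩
    have ha : t ≤ c / b := (Nat.le_div_iff_mul_le hb).mpr h1
    have hb' : c / b < t + 1 := (Nat.div_lt_iff_lt_mul hb).mpr (by calc c < t*b+b := h2
      _ = (t+1)*b := by ring)
    omega

lemma sum_range_add' (m k : ℕ) (f : ℕ → ℝ) :
    ∑ c ∈ range (m+k), f c = (∑ c ∈ range m, f c) + ∑ r ∈ range k, f (m+r) := by
  induction k with
  | zero => simp
  | succ k ih =>
    rw [show m+(k+1) = (m+k)+1 from rfl, Finset.sum_range_succ, ih, Finset.sum_range_succ]; ring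

lemma sum_range_mul (a b : ℕ) (f : ℕ → ℝ) :
    ∑ c ∈ range (a*b), f c = ∑ q ∈ range a, ∑ r ∈ range b, f (q*b+r) := by
  induction a with
  | zero => simp
  | succ a ih =>
    rw [show (a+1)*b = a*b + b from by ring, sum_range_add', ih, Finset.sum_range_succ]

lemma sum_range_two_mul (a : ℕ) (g : ℕ → ℝ) :
    ∑ i ∈ range (2*a), g i = ∑ q ∈ range a, (g (2*q) + g (2*q+1)) := by
  induction a with
  | zero => simp
  | succ a ih =>
    rw [show 2*(a+1) = (2*a+1)+1 from by ring, Finset.sum_range_succ, Finset.sum_range_succ,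
      ih, Finset.sum_range_succ]
    ring

lemma Dh_coarse {N L k : ℕ} (hk : k < L) (hLN : L ≤ N) (j : ℕ) {c c' : ℕ}
    (h : c / 2^(N-L) = c' / 2^(N-L)) : Dh N k j c = Dh N k j c' := by
  unfold Dh
  have e : N - k - 1 = (N - L) + (L - k - 1) := by omega
  rw [e, pow_add, ← Nat.div_div_eq_div_mul, ← Nat.div_div_eq_div_mul, h]

lemma sum_Dh_mul_eq_zero {N L : ℕ} (hL : L < N) (j : ℕ) (g : ℕ → ℝ)
    (hg : ∀ c c', c / 2^(N-L) = c' / 2^(N-L) → g c = g c') :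
    ∑ c ∈ range (2^N), Dh N L j c * g c = 0 := by
  have hb : (0:ℕ) < 2^(N-L-1) := Nat.pow_pos (by norm_num)
  have hsplit : 2^N = 2*2^L * 2^(N-L-1) := by
    rw [mul_comm 2 (2^L), ← pow_succ, ← pow_add]; congr 1; omega
  rw [hsplit, sum_range_mul, sum_range_two_mul]
  apply Finset.sum_eq_zero
  intro q hq
  rw [← Finset.sum_add_distrib]
  apply Finset.sum_eq_zero
  intro r hr
  have hr' : r < 2^(N-L-1) := Finset.mem_range.mp hr
  set b := 2^(N-L-1) with hbdef
  have h1 : (2*q*b + r) / b = 2*q := (div_iff hb).mpr ⟨Nat.le_add_right _ _, by omega⟩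
  have h2 : ((2*q+1)*b + r) / b = 2*q+1 := (div_iff hb).mpr ⟨Nat.le_add_right _ _, by omega⟩
  have hb2 : 2^(N-L) = 2*b := by rw [hbdef, ← pow_succ']; congr 1; omega
  have hgeq : g (2*q*b + r) = g ((2*q+1)*b + r) := by
    apply hg
    rw [hb2]
    have e1 : (2*q*b + r) / (2*b) = q := by
      refine (div_iff (by omega)).mpr ⟨?_, ?_⟩
      · have : q*(2*b) = 2*q*b := by ring
        omega
      · have : q*(2*b) = 2*q*b := by ring
        omega
    have e2 : ((2*q+1)*b + r) / (2*b) = q := by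
      refine (div_iff (by omega)).mpr ⟨?_, ?_⟩
      · have : q*(2*b) ≤ (2*q+1)*b := by nlinarith
        omega
      · have h3 : (2*q+1)*b + r = q*(2*b) + (b + r) := by ring
        omega
    rw [e1, e2]
  show Dh N L j (2*q*b+r) * g (2*q*b+r) + Dh N L j ((2*q+1)*b+r) * g ((2*q+1)*b+r) = 0
  unfold Dh
  rw [← hbdef, h1, h2, ← hgeq, Dq_succ]
  ring




lemma sum_Dh_sq {N k : ℕ} (hk : k < N) {j j' : ℕ} (hj : j < 2^k) :
    ∑ c ∈ Finset.range (2^N), Dh N k j c * Dh N k j' c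
      = if j = j' then ((2:ℝ)^(N-k)) else 0 := by
  by_cases h : j = j'
  · subst h; rw [if_pos rfl]
    have hb : (0:ℕ) < 2^(N-k-1) := Nat.pow_pos (by norm_num)
    set b := 2^(N-k-1) with hbdef
    have step1 : ∀ c, Dh N k j c * Dh N k j c
        = if c / b = 2*j ∨ c / b = 2*j+1 then (1:ℝ) else 0 := fun c => Dq_sq j _
    rw [Finset.sum_congr rfl (fun c _ => step1 c), Finset.sum_boole]
    have hB : 2*j*b + 2*b ≤ 2^N := by
      have h2 : 2^N = 2^k*(2*b) := by
        rw [hbdef, show 2*2^(N-k-1) = 2^(N-k) from by rw [← pow_succ']; congr 1; omega,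
          ← pow_add]; congr 1; omega
      calc 2*j*b + 2*b = (j+1)*(2*b) := by ring
        _ ≤ 2^k*(2*b) := Nat.mul_le_mul_right _ hj
        _ = 2^N := h2.symm
    have hfil : (range (2^N)).filter (fun c => c / b = 2*j ∨ c / b = 2*j+1)
        = Finset.Ico (2*j*b) (2*j*b + 2*b) := by
      ext c
      simp only [Finset.mem_filter, Finset.mem_range, Finset.mem_Ico, div_iff hb]
      have e1 : (2*j)*b = 2*j*b := by ring
      have e2 : (2*j+1)*b = 2*j*b + b := by ring
      rw [e1, e2]
      omega
    rw [hfil, Nat.card_Ico]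
    have : 2*j*b + 2*b - 2*j*b = 2*b := by omega
    rw [this]
    push_cast
    rw [hbdef]
    push_cast
    rw [← pow_succ']
    congr 1
    omega
  · rw [if_neg h]
    exact Finset.sum_eq_zero fun c _ => Dq_mul_ne h _

lemma prod_Dh_zero {N : ℕ} {ι : Type*} [DecidableEq ι] (I : Finset ι) (lev pos : ι → ℕ)
    (i0 : ι) (hi0 : i0 ∈ I) (hmax : ∀ i ∈ I, i ≠ i0 → lev i < lev i0) (hN : lev i0 < N) :
    ∑ c ∈ Finset.range (2^N), ∏ i ∈ I, Dh N (lev i) (pos i) c = 0 := by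
  have hrw : ∀ c, ∏ i ∈ I, Dh N (lev i) (pos i) c
      = Dh N (lev i0) (pos i0) c * ∏ i ∈ I.erase i0, Dh N (lev i) (pos i) c :=
    fun c => (Finset.mul_prod_erase I _ hi0).symm
  rw [Finset.sum_congr rfl (fun c _ => hrw c)]
  refine sum_Dh_mul_eq_zero hN (pos i0) _ (fun c c' h => ?_)
  refine Finset.prod_congr rfl (fun i hi => ?_)
  exact Dh_coarse (hmax i (Finset.mem_of_mem_erase hi) (Finset.ne_of_mem_erase hi)) hN.le _ h

lemma prod_Dh_zero' {N : ℕ} {ι : Type*} [DecidableEq ι] (I : Finset ι) (hne : I.Nonempty)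
    (lev pos : ι → ℕ) (hinj : ∀ i ∈ I, ∀ i' ∈ I, lev i = lev i' → i = i')
    (hN : ∀ i ∈ I, lev i < N) :
    ∑ c ∈ Finset.range (2^N), ∏ i ∈ I, Dh N (lev i) (pos i) c = 0 := by
  obtain ⟨i0, hi0, hm⟩ := Finset.exists_max_image I lev hne
  exact prod_Dh_zero I lev pos i0 hi0
    (fun i hi hne' => lt_of_le_of_ne (hm i hi) (fun h => hne' (hinj i hi i0 hi0 h)))
    (hN i0 hi0)


lemma haar1_cell {N k : ℕ} (hk : k < N) (j c : ℕ) {x : ℝ}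
    (hx1 : (c:ℝ)/2^N ≤ x) (hx2 : x < ((c:ℝ)+1)/2^N) :
    haar1 k j x = Dh N k j c := by
  have hN : (0:ℝ) < 2^N := by positivity
  have key : ∀ a : ℕ, ((a:ℝ)/2^N ≤ x ↔ a ≤ c) := by
    intro a
    constructor
    · intro h; by_contra hc; push_neg at hc
      have hca : (c:ℝ)+1 ≤ a := by exact_mod_cast hc
      have : x < (a:ℝ)/2^N := lt_of_lt_of_le hx2 (by gcongr)
      linarith
    · intro h
      have : (a:ℝ) ≤ c := by exact_mod_cast h
      exact le_trans (by gcongr) hx1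
  have key2 : ∀ a : ℕ, (x < (a:ℝ)/2^N ↔ c < a) := by
    intro a
    constructor
    · intro h; by_contra hc; push_neg at hc
      have : (a:ℝ) ≤ c := by exact_mod_cast hc
      have : (a:ℝ)/2^N ≤ x := le_trans (by gcongr) hx1
      linarith
    · intro h
      have : (c:ℝ)+1 ≤ a := by exact_mod_cast h
      exact lt_of_lt_of_le hx2 (by gcongr)
  set b := 2^(N-k-1) with hbdef
  have hb0 : 0 < b := Nat.pow_pos (by norm_num)
  have hpow : (2:ℝ)^N = 2^(N-k-1) * 2 * 2^k := by
    rw [← pow_succ, ← pow_add]; congr 1; omega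
  have e1 : ((2*j*b : ℕ):ℝ)/2^N = (j:ℝ)/2^k := by
    rw [hbdef]; push_cast
    rw [hpow]; field_simp
  have e2 : ((2*j*b + b : ℕ):ℝ)/2^N = ((j:ℝ)+1/2)/2^k := by
    rw [hbdef]; push_cast
    rw [hpow]; field_simp
  have e3 : ((2*j*b + 2*b : ℕ):ℝ)/2^N = ((j:ℝ)+1)/2^k := by
    rw [hbdef]; push_cast
    rw [hpow]; field_simp
  have H1 : ((j:ℝ)/2^k ≤ x ∧ x < ((j:ℝ)+1/2)/2^k) ↔ c / b = 2*j := by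
    rw [← e1, ← e2, key, key2, div_iff hb0]
    all_goals first
    | rfl
    | (constructor <;> rintro ⟨u, v⟩ <;> exact ⟨by nlinarith, by nlinarith⟩)
  have H2 : (((j:ℝ)+1/2)/2^k ≤ x ∧ x < ((j:ℝ)+1)/2^k) ↔ c / b = 2*j+1 := by
    rw [← e2, ← e3, key, key2, div_iff hb0]
    all_goals first
    | rfl
    | (constructor <;> rintro ⟨u, v⟩ <;> exact ⟨by nlinarith, by nlinarith⟩)
  rw [haar1]
  show _ = Dq j (c / b)
  rw [Dq]
  split_ifs with p1 p2 q1 q2 q3 <;> first | rfl | (exfalso; tauto)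


def cellSet (N c1 c2 : ℕ) : Set (Fin 2 → ℝ) :=
  Set.univ.pi fun i => Set.Ico (((![c1,c2] i : ℕ) : ℝ)/2^N) (((![c1,c2] i : ℕ) + 1)/2^N)

lemma mem_cellSet {N c1 c2 : ℕ} {x : Fin 2 → ℝ} :
    x ∈ cellSet N c1 c2 ↔
      ((c1:ℝ)/2^N ≤ x 0 ∧ x 0 < ((c1:ℝ)+1)/2^N) ∧
      ((c2:ℝ)/2^N ≤ x 1 ∧ x 1 < ((c2:ℝ)+1)/2^N) := by
  simp [cellSet, Set.mem_pi, Fin.forall_fin_two, Set.mem_Ico, and_assoc]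

lemma measurableSet_cellSet {N c1 c2 : ℕ} : MeasurableSet (cellSet N c1 c2) :=
  MeasurableSet.univ_pi fun i => measurableSet_Ico

lemma volume_cellSet {N c1 c2 : ℕ} :
    volume (cellSet N c1 c2) = ENNReal.ofReal ((2^N : ℝ)⁻¹) ^ 2 := by
  rw [cellSet, volume_pi_pi]
  have : ∀ i : Fin 2, volume (Set.Ico (((![c1,c2] i : ℕ) : ℝ)/2^N) (((![c1,c2] i : ℕ) + 1)/2^N))
      = ENNReal.ofReal ((2^N : ℝ)⁻¹) := by
    intro i
    rw [Real.volume_Ico]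
    congr 1
    field_simp
    ring
  rw [Finset.prod_congr rfl (fun i _ => this i)]
  simp [sq]

lemma cell_unique {N a b : ℕ} {y : ℝ} (h1 : (a:ℝ)/2^N ≤ y) (h2 : y < ((a:ℝ)+1)/2^N)
    (h3 : (b:ℝ)/2^N ≤ y) (h4 : y < ((b:ℝ)+1)/2^N) : a = b := by
  have hN : (0:ℝ) < 2^N := by positivity
  have e1 : (a:ℝ) < (b:ℝ)+1 := by
    have := lt_of_le_of_lt h1 h4
    rwa [div_lt_div_iff_of_pos_right hN] at this
  have e2 : (b:ℝ) < (a:ℝ)+1 := by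
    have := lt_of_le_of_lt h3 h2
    rwa [div_lt_div_iff_of_pos_right hN] at this
  have f1 : a < b+1 := by exact_mod_cast e1
  have f2 : b < a+1 := by exact_mod_cast e2
  omega

lemma integral_cube_eq_sum (N : ℕ) (F : (Fin 2 → ℝ) → ℝ) (G : ℕ → ℕ → ℝ)
    (hFG : ∀ c1 c2, c1 < 2^N → c2 < 2^N → ∀ x ∈ cellSet N c1 c2, F x = G c1 c2) :
    ∫ x in unitCube 2, F x
      = ((2:ℝ)^N)⁻¹^2 * ∑ c1 ∈ range (2^N), ∑ c2 ∈ range (2^N), G c1 c2 := by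
  have hN : (0:ℝ) < 2^N := by positivity
  set Q : Set (Fin 2 → ℝ) := Set.univ.pi fun _ => Set.Ico (0:ℝ) 1 with hQdef
  -- step 1 : a.e. equality of unit cube and Ico cube
  have hnull : ∀ i : Fin 2, volume {x : Fin 2 → ℝ | x i = 1} = 0 := by
    intro i
    have : {x : Fin 2 → ℝ | x i = 1} = Set.univ.pi fun j => if j = i then ({1} : Set ℝ) else Set.univ := by
      ext x
      simp only [Set.mem_setOf_eq, Set.mem_pi, Set.mem_univ, forall_true_left]
      constructor
      · intro h j; by_cases hj : j = i <;> simp [hj, h]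
      · intro h; have := h i; simpa using this
    rw [this, volume_pi_pi]
    apply Finset.prod_eq_zero (Finset.mem_univ i)
    simp
  have hae : unitCube 2 =ᵐ[(volume : Measure (Fin 2 → ℝ))] Q := by
    rw [MeasureTheory.ae_eq_set]
    constructor
    · apply measure_mono_null ?_ (measure_union_null (hnull 0) (hnull 1))
      rintro x ⟨hxc, hxq⟩
      have h0 : x 0 ∈ Set.Icc (0:ℝ) 1 := hxc 0 (Set.mem_univ _)
      have h1 : x 1 ∈ Set.Icc (0:ℝ) 1 := hxc 1 (Set.mem_univ _)
      have hnot : ¬(x 0 < 1 ∧ x 1 < 1) := by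
        rintro ⟨l0, l1⟩
        apply hxq
        rw [hQdef]
        simp only [Set.mem_pi, Set.mem_univ, forall_true_left, Set.mem_Ico]
        intro i
        fin_cases i
        · exact ⟨h0.1, l0⟩
        · exact ⟨h1.1, l1⟩
      simp only [Set.mem_union, Set.mem_setOf_eq]
      by_cases e0 : x 0 < 1
      · right
        have : ¬ x 1 < 1 := fun h => hnot ⟨e0, h⟩
        exact le_antisymm h1.2 (not_lt.mp this)
      · left
        exact le_antisymm h0.2 (not_lt.mp e0)
    · have : Q \ unitCube 2 = ∅ := by
        rw [Set.diff_eq_empty]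
        intro x hx i _
        have := hx i (Set.mem_univ _)
        exact ⟨this.1, this.2.le⟩
      rw [this]
      exact measure_empty
  rw [setIntegral_congr_set hae]
  -- step 2 : Q is the disjoint union of the cells
  have hQeq : Q = ⋃ p ∈ ((range (2^N)) ×ˢ (range (2^N)) : Finset (ℕ × ℕ)), cellSet N p.1 p.2 := by
    ext x
    simp only [Set.mem_iUnion, Finset.mem_product, Finset.mem_range, hQdef, Set.mem_pi,
      Set.mem_univ, forall_true_left, Set.mem_Ico, Fin.forall_fin_two]
    constructor
    · rintro ⟨⟨h00, h01⟩, h10, h11⟩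
      refine ⟨(⌊2^N * x 0⌋₊, ⌊2^N * x 1⌋₊), ⟨⟨?_, ?_⟩, ?_⟩⟩
      · refine Nat.floor_lt (by positivity) |>.mpr ?_
        calc 2^N * x 0 < 2^N * 1 := mul_lt_mul_of_pos_left h01 hN
          _ = ((2^N : ℕ) : ℝ) := by push_cast; ring
      · refine Nat.floor_lt (by positivity) |>.mpr ?_
        calc 2^N * x 1 < 2^N * 1 := mul_lt_mul_of_pos_left h11 hN
          _ = ((2^N : ℕ) : ℝ) := by push_cast; ring
      · rw [mem_cellSet]
        constructor
        · constructor
          · rw [div_le_iff₀ hN]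
            calc ((⌊2^N * x 0⌋₊ : ℕ) : ℝ) ≤ 2^N * x 0 := Nat.floor_le (mul_nonneg hN.le h00)
              _ = x 0 * 2^N := mul_comm _ _
          · rw [lt_div_iff₀ hN]
            calc x 0 * 2^N = 2^N * x 0 := mul_comm _ _
              _ < (⌊2^N * x 0⌋₊ : ℝ) + 1 := Nat.lt_floor_add_one _
        · constructor
          · rw [div_le_iff₀ hN]
            calc ((⌊2^N * x 1⌋₊ : ℕ) : ℝ) ≤ 2^N * x 1 := Nat.floor_le (mul_nonneg hN.le h10)
              _ = x 1 * 2^N := mul_comm _ _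
          · rw [lt_div_iff₀ hN]
            calc x 1 * 2^N = 2^N * x 1 := mul_comm _ _
              _ < (⌊2^N * x 1⌋₊ : ℝ) + 1 := Nat.lt_floor_add_one _
    · rintro ⟨⟨c1, c2⟩, ⟨⟨hc1, hc2⟩, hcell⟩⟩
      rw [mem_cellSet] at hcell
      obtain ⟨⟨u1, v1⟩, u2, v2⟩ := hcell
      have b1 : ((c1:ℝ)+1)/2^N ≤ 1 := by
        rw [div_le_one hN]
        have h' : (c1+1 : ℕ) ≤ 2^N := hc1
        calc (c1:ℝ)+1 = ((c1+1 : ℕ) : ℝ) := by push_cast; ring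
          _ ≤ ((2^N : ℕ) : ℝ) := by exact_mod_cast h'
          _ = 2^N := by push_cast; ring
      have b2 : ((c2:ℝ)+1)/2^N ≤ 1 := by
        rw [div_le_one hN]
        have h' : (c2+1 : ℕ) ≤ 2^N := hc2
        calc (c2:ℝ)+1 = ((c2+1 : ℕ) : ℝ) := by push_cast; ring
          _ ≤ ((2^N : ℕ) : ℝ) := by exact_mod_cast h'
          _ = 2^N := by push_cast; ring
      have p1 : (0:ℝ) ≤ (c1:ℝ)/2^N := by positivity
      have p2 : (0:ℝ) ≤ (c2:ℝ)/2^N := by positivity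
      exact ⟨⟨le_trans p1 u1, lt_of_lt_of_le v1 b1⟩, le_trans p2 u2, lt_of_lt_of_le v2 b2⟩
  rw [hQeq]
  have hmeas : ∀ p ∈ ((range (2^N)) ×ˢ (range (2^N)) : Finset (ℕ × ℕ)),
      MeasurableSet (cellSet N p.1 p.2) := fun p _ => measurableSet_cellSet
  have hdisj : Set.Pairwise (↑((range (2^N)) ×ˢ (range (2^N)) : Finset (ℕ × ℕ)))
      (Function.onFun Disjoint fun p : ℕ × ℕ => cellSet N p.1 p.2) := by
    intro p hp q hq hpq
    simp only [Function.onFun]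
    rw [Set.disjoint_left]
    intro x hxp hxq
    rw [mem_cellSet] at hxp hxq
    apply hpq
    have e1 : p.1 = q.1 := cell_unique hxp.1.1 hxp.1.2 hxq.1.1 hxq.1.2
    have e2 : p.2 = q.2 := cell_unique hxp.2.1 hxp.2.2 hxq.2.1 hxq.2.2
    exact Prod.ext e1 e2
  have hint : ∀ p ∈ ((range (2^N)) ×ˢ (range (2^N)) : Finset (ℕ × ℕ)),
      IntegrableOn F (cellSet N p.1 p.2) := by
    intro p hp
    simp only [Finset.mem_product, Finset.mem_range] at hp
    rw [integrableOn_congr_fun (hFG p.1 p.2 hp.1 hp.2) measurableSet_cellSet]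
    rw [integrableOn_const_iff]
    right
    rw [volume_cellSet]
    exact lt_of_le_of_lt (le_of_eq rfl) (by
      have : ENNReal.ofReal ((2^N : ℝ)⁻¹) ^ 2 < ⊤ := by
        apply ENNReal.pow_lt_top
        exact ENNReal.ofReal_lt_top
      exact this)
  rw [integral_biUnion_finset _ hmeas hdisj hint]
  rw [Finset.sum_product]
  rw [Finset.mul_sum]
  refine Finset.sum_congr rfl (fun c1 hc1 => ?_)
  rw [Finset.mul_sum]
  refine Finset.sum_congr rfl (fun c2 hc2 => ?_)
  simp only [Finset.mem_range] at hc1 hc2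
  rw [setIntegral_congr_fun measurableSet_cellSet (fun x hx => hFG c1 c2 hc1 hc2 x hx)]
  rw [setIntegral_const, measureReal_def, volume_cellSet]
  rw [ENNReal.toReal_pow, ENNReal.toReal_ofReal (by positivity)]
  rw [smul_eq_mul]



/-- the rectangles occurring in `ψ_s` -/
noncomputable def Afin (n s : ℕ) : Finset Rect :=
  (rectsEq 2 n).filter (fun R => R.1 0 = s ∧ R.1 1 = n - s)

noncomputable def psid (n : ℕ) (ε : Rect → ℝ) (s c1 c2 : ℕ) : ℝ :=
  ∑ R ∈ Afin n s,
    ε R * (Dh (n+1) (R.1 0) (R.2 0) c1 * Dh (n+1) (R.1 1) (R.2 1) c2)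

noncomputable def PsiD (n : ℕ) (ε : Rect → ℝ) (c1 c2 : ℕ) : ℝ :=
  ∏ s ∈ range (n+1), (1 + psid n ε s c1 c2 / 2)

lemma rect_ext {R R' : Rect} (h10 : R'.1 0 = R.1 0) (h11 : R'.1 1 = R.1 1)
    (h20 : R'.2 0 = R.2 0) (h21 : R'.2 1 = R.2 1) : R' = R := by
  have e1 : R'.1 = R.1 := funext fun i => by
    match i with
    | 0 => exact h10
    | 1 => exact h11
  have e2 : R'.2 = R.2 := funext fun i => by
    match i with
    | 0 => exact h20
    | 1 => exact h21
  exact Prod.ext e1 e2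

lemma mem_rectsGe' {n : ℕ} {R : Rect} (h : R ∈ rectsGe 2 n) :
    R.1 0 + R.1 1 ≤ n ∧ R.2 0 < 2^(R.1 0) ∧ R.2 1 < 2^(R.1 1) := by
  simp only [rectsGe, Finset.mem_filter] at h
  obtain ⟨-, hsum, hpos⟩ := h
  rw [Fin.sum_univ_two] at hsum
  exact ⟨hsum, hpos 0, hpos 1⟩

lemma mem_Afin' {n s : ℕ} {R : Rect} (h : R ∈ Afin n s) :
    R.1 0 = s ∧ R.1 1 = n - s ∧ s ≤ n ∧ R.2 0 < 2^s ∧ R.2 1 < 2^(n-s) := by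
  simp only [Afin, rectsEq, Finset.mem_filter] at h
  obtain ⟨⟨-, hsum, hpos⟩, h1, h2⟩ := h
  rw [Fin.sum_univ_two] at hsum
  refine ⟨h1, h2, by omega, by rw [← h1]; exact hpos 0, by rw [← h2]; exact hpos 1⟩

lemma Afin_mem_of {n : ℕ} {R : Rect} (h : R ∈ rectsGe 2 n) (hsum : R.1 0 + R.1 1 = n) :
    R ∈ Afin n (R.1 0) := by
  simp only [Afin, rectsEq, rectsGe, Finset.mem_filter, Fin.sum_univ_two] at h ⊢
  obtain ⟨hprod, hle, hpos⟩ := h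
  exact ⟨⟨hprod, hsum, hpos⟩, trivial, by omega⟩

lemma opt_form (N k j : ℕ) (T : Finset ℕ) (w v : ℕ → ℕ) (c : ℕ) :
    Dh N k j c * ∏ s ∈ T, Dh N (w s) (v s) c
      = ∏ i ∈ insert none (T.image some),
          Dh N (i.elim k w) (i.elim j v) c := by
  rw [Finset.prod_insert (by simp), Finset.prod_image (fun a _ b _ h => by injection h)]
  rfl

lemma sum_swap_factor {ι : Type} (A : Finset ι) (M : ℕ) (F1 F2 : ℕ → ℝ) (a : ι → ℝ)
    (g1 g2 : ι → ℕ → ℝ) :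
    ∑ c1 ∈ range M, ∑ c2 ∈ range M, F1 c1 * F2 c2 * (∑ i ∈ A, a i * (g1 i c1 * g2 i c2))
      = ∑ i ∈ A, a i * ((∑ c1 ∈ range M, F1 c1 * g1 i c1) *
          (∑ c2 ∈ range M, F2 c2 * g2 i c2)) := by
  calc ∑ c1 ∈ range M, ∑ c2 ∈ range M, F1 c1 * F2 c2 * (∑ i ∈ A, a i * (g1 i c1 * g2 i c2))
      = ∑ c1 ∈ range M, ∑ i ∈ A, ∑ c2 ∈ range M,
          F1 c1 * F2 c2 * (a i * (g1 i c1 * g2 i c2)) := by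
        refine Finset.sum_congr rfl fun c1 _ => ?_
        simp only [Finset.mul_sum]
        exact Finset.sum_comm
    _ = ∑ i ∈ A, ∑ c1 ∈ range M, ∑ c2 ∈ range M,
          F1 c1 * F2 c2 * (a i * (g1 i c1 * g2 i c2)) := Finset.sum_comm
    _ = ∑ i ∈ A, a i * ((∑ c1 ∈ range M, F1 c1 * g1 i c1) *
          (∑ c2 ∈ range M, F2 c2 * g2 i c2)) := by
        refine Finset.sum_congr rfl fun i _ => ?_
        rw [Finset.sum_mul_sum, Finset.mul_sum]
        refine Finset.sum_congr rfl fun c1 _ => ?_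
        rw [Finset.mul_sum]
        refine Finset.sum_congr rfl fun c2 _ => ?_
        ring

lemma sum_swap_factor' {ι : Type} (A : Finset ι) (M : ℕ) (a : ι → ℝ)
    (g1 g2 : ι → ℕ → ℝ) :
    ∑ c1 ∈ range M, ∑ c2 ∈ range M, (∑ i ∈ A, a i * (g1 i c1 * g2 i c2))
      = ∑ i ∈ A, a i * ((∑ c1 ∈ range M, g1 i c1) * (∑ c2 ∈ range M, g2 i c2)) := by
  have h := sum_swap_factor A M (fun _ => (1:ℝ)) (fun _ => (1:ℝ)) a g1 g2
  simp only [one_mul] at h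
  exact h

/-- the key vanishing result for a monomial with `T ≠ {k1}` -/
lemma mono_zero (n : ℕ) (R : Rect) (hR : R ∈ rectsGe 2 n) (T : Finset ℕ)
    (hT : ∀ s ∈ T, s < n+1) (hTne : T ≠ {R.1 0}) (u v : ℕ → ℕ) :
    (∑ c ∈ range (2^(n+1)), Dh (n+1) (R.1 0) (R.2 0) c * ∏ s ∈ T, Dh (n+1) s (u s) c) = 0 ∨
    (∑ c ∈ range (2^(n+1)), Dh (n+1) (R.1 1) (R.2 1) c * ∏ s ∈ T, Dh (n+1) (n-s) (v s) c)
      = 0 := by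
  obtain ⟨hk, hj1, hj2⟩ := mem_rectsGe' hR
  set k1 := R.1 0 with hk1
  set k2 := R.1 1 with hk2
  by_cases hk1T : k1 ∈ T
  · have hne : T.Nonempty := ⟨k1, hk1T⟩
    by_cases hgt : ∃ s ∈ T, k1 < s
    · left
      have hform : (∑ c ∈ range (2^(n+1)), Dh (n+1) k1 (R.2 0) c * ∏ s ∈ T, Dh (n+1) s (u s) c)
          = ∑ c ∈ range (2^(n+1)), ∏ i ∈ insert none (T.image some),
              Dh (n+1) (i.elim k1 fun s => s) (i.elim (R.2 0) u) c :=
        Finset.sum_congr rfl fun c _ => opt_form (n+1) k1 (R.2 0) T (fun s => s) u c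
      rw [hform]
      set L := T.max' hne with hL
      have hLT : L ∈ T := T.max'_mem hne
      have hkL : k1 < L := by
        obtain ⟨s, hs, hlt⟩ := hgt
        exact lt_of_lt_of_le hlt (T.le_max' s hs)
      refine prod_Dh_zero _ _ _ (some L) (by simp [hLT]) ?_ ?_
      · intro i hi hine
        simp only [Finset.mem_insert, Finset.mem_image] at hi
        rcases hi with rfl | ⟨s, hs, rfl⟩
        · simpa using hkL
        · have hsL : s ≠ L := fun h => hine (by rw [h])
          simpa using lt_of_le_of_ne (T.le_max' s hs) hsL
      · simpa using hT L hLT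
    · push_neg at hgt
      right
      have hex : ∃ s0 ∈ T, s0 ≠ k1 := by
        by_contra hc
        push_neg at hc
        exact hTne (Finset.eq_singleton_iff_unique_mem.mpr ⟨hk1T, fun s hs => hc s hs⟩)
      obtain ⟨s0, hs0T, hs0⟩ := hex
      set m := T.min' hne with hm
      have hmT : m ∈ T := T.min'_mem hne
      have hmk : m < k1 := lt_of_le_of_lt (T.min'_le s0 hs0T)
        (lt_of_le_of_ne (hgt s0 hs0T) hs0)
      have hk1n : k1 ≤ n := by omega
      have hform : (∑ c ∈ range (2^(n+1)), Dh (n+1) k2 (R.2 1) c * ∏ s ∈ T, Dh (n+1) (n-s) (v s) c)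
          = ∑ c ∈ range (2^(n+1)), ∏ i ∈ insert none (T.image some),
              Dh (n+1) (i.elim k2 fun s => n - s) (i.elim (R.2 1) v) c :=
        Finset.sum_congr rfl fun c _ => opt_form (n+1) k2 (R.2 1) T (fun s => n - s) v c
      rw [hform]
      refine prod_Dh_zero _ _ _ (some m) (by simp [hmT]) ?_ ?_
      · intro i hi hine
        simp only [Finset.mem_insert, Finset.mem_image] at hi
        rcases hi with rfl | ⟨s, hs, rfl⟩
        · show k2 < n - m
          omega
        · have hsm : s ≠ m := fun h => hine (by rw [h])
          have : m < s := lt_of_le_of_ne (T.min'_le s hs) (Ne.symm hsm)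
          have hsn : s < n + 1 := hT s hs
          show n - s < n - m
          omega
      · show n - m < n + 1
        omega
  · left
    have hform : (∑ c ∈ range (2^(n+1)), Dh (n+1) k1 (R.2 0) c * ∏ s ∈ T, Dh (n+1) s (u s) c)
        = ∑ c ∈ range (2^(n+1)), ∏ i ∈ insert none (T.image some),
            Dh (n+1) (i.elim k1 fun s => s) (i.elim (R.2 0) u) c :=
      Finset.sum_congr rfl fun c _ => opt_form (n+1) k1 (R.2 0) T (fun s => s) u c
    rw [hform]
    refine prod_Dh_zero' _ ⟨none, by simp⟩ _ _ ?_ ?_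
    · intro i hi i' hi' hlev
      simp only [Finset.mem_insert, Finset.mem_image] at hi hi'
      rcases hi with rfl | ⟨s, hs, rfl⟩ <;> rcases hi' with rfl | ⟨s', hs', rfl⟩
      · rfl
      · exfalso
        have he : k1 = s' := by simpa using hlev
        exact hk1T (by rw [he]; exact hs')
      · exfalso
        have he : s = k1 := by simpa using hlev
        exact hk1T (by rw [← he]; exact hs)
      · simpa using hlev
    · intro i hi
      simp only [Finset.mem_insert, Finset.mem_image] at hi
      rcases hi with rfl | ⟨s, hs, rfl⟩
      · show k1 < n + 1
        omega
      · simpa using hT s hs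

lemma term_eval (n : ℕ) (ε : Rect → ℝ) (R : Rect) (hR : R ∈ rectsGe 2 n)
    (T : Finset ℕ) (hTs : T ⊆ range (n+1)) :
    ∑ c1 ∈ range (2^(n+1)), ∑ c2 ∈ range (2^(n+1)),
      Dh (n+1) (R.1 0) (R.2 0) c1 * Dh (n+1) (R.1 1) (R.2 1) c2
        * ∏ s ∈ T, (psid n ε s c1 c2 / 2)
    = if T = {R.1 0} ∧ R.1 0 + R.1 1 = n then ε R * 2^(n+1) else 0 := by
  obtain ⟨hk, hj1, hj2⟩ := mem_rectsGe' hR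
  have hT' : ∀ s ∈ T, s < n + 1 := fun s hs => Finset.mem_range.mp (hTs hs)
  have hk1N : R.1 0 < n + 1 := by omega
  have hk2N : R.1 1 < n + 1 := by omega
  by_cases hcase : T = {R.1 0}
  · rw [hcase]
    rw [if_congr (show ((({R.1 0} : Finset ℕ) = {R.1 0}) ∧ R.1 0 + R.1 1 = n)
      ↔ R.1 0 + R.1 1 = n by simp) rfl rfl]
    have hps : ∀ c1 c2, ∏ s ∈ ({R.1 0} : Finset ℕ), (psid n ε s c1 c2 / 2)
        = ∑ R' ∈ Afin n (R.1 0), (ε R'/2) *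
            (Dh (n+1) (R'.1 0) (R'.2 0) c1 * Dh (n+1) (R'.1 1) (R'.2 1) c2) := by
      intro c1 c2
      rw [Finset.prod_singleton, psid, Finset.sum_div]
      exact Finset.sum_congr rfl fun R' _ => by ring
    simp only [hps]
    rw [sum_swap_factor (Afin n (R.1 0)) (2^(n+1))
      (fun c1 => Dh (n+1) (R.1 0) (R.2 0) c1) (fun c2 => Dh (n+1) (R.1 1) (R.2 1) c2)
      (fun R' => ε R'/2) (fun R' c1 => Dh (n+1) (R'.1 0) (R'.2 0) c1)
      (fun R' c2 => Dh (n+1) (R'.1 1) (R'.2 1) c2)]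
    by_cases hsum : R.1 0 + R.1 1 = n
    · rw [if_pos hsum]
      rw [Finset.sum_eq_single_of_mem R (Afin_mem_of hR hsum) ?side]
      case side =>
        intro R' hR' hne
        obtain ⟨e0, e1, hsn, hb0, hb1⟩ := mem_Afin' hR'
        have e1' : R'.1 1 = R.1 1 := by omega
        rw [e0, e1']
        rw [sum_Dh_sq hk1N hj1, sum_Dh_sq hk2N hj2]
        rcases eq_or_ne (R.2 0) (R'.2 0) with d1 | d1
        · rcases eq_or_ne (R.2 1) (R'.2 1) with d2 | d2
          · exact absurd (rect_ext e0 e1' d1.symm d2.symm) hne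
          · rw [if_neg d2]; ring
        · rw [if_neg d1]; ring
      rw [sum_Dh_sq hk1N hj1, sum_Dh_sq hk2N hj2, if_pos rfl, if_pos rfl]
      have hpow : (2:ℝ)^(n+1-R.1 0) * 2^(n+1-R.1 1) = 2^(n+2) := by
        rw [← pow_add]; congr 1; omega
      rw [hpow, show ((2:ℝ)^(n+2)) = 2 * 2^(n+1) from by rw [pow_succ]; ring]
      ring
    · rw [if_neg hsum]
      refine Finset.sum_eq_zero fun R' hR' => ?_
      obtain ⟨e0, e1, hsn, hb0, hb1⟩ := mem_Afin' hR'
      have hlt : R.1 1 < n - R.1 0 := by omega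
      have hS2 : (∑ c2 ∈ range (2^(n+1)),
          Dh (n+1) (R.1 1) (R.2 1) c2 * Dh (n+1) (R'.1 1) (R'.2 1) c2) = 0 := by
        rw [e1]
        calc ∑ c ∈ range (2^(n+1)), Dh (n+1) (R.1 1) (R.2 1) c * Dh (n+1) (n - R.1 0) (R'.2 1) c
            = ∑ c ∈ range (2^(n+1)), Dh (n+1) (n - R.1 0) (R'.2 1) c * Dh (n+1) (R.1 1) (R.2 1) c :=
              Finset.sum_congr rfl fun c _ => mul_comm _ _
          _ = 0 := sum_Dh_mul_eq_zero (by omega) _ _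
                (fun c c' h => Dh_coarse hlt (by omega) _ h)
      rw [hS2]
      ring
  · rw [if_neg (fun hand => hcase hand.1)]
    have hcomb : ∀ c1 c2, ∏ s ∈ T, (psid n ε s c1 c2 / 2)
        = ∑ p ∈ T.pi (fun s => Afin n s),
            ((∏ x ∈ T.attach, ε (p x.1 x.2))/2^T.card)
              * ((∏ x ∈ T.attach, Dh (n+1) ((p x.1 x.2).1 0) ((p x.1 x.2).2 0) c1)
                 * (∏ x ∈ T.attach, Dh (n+1) ((p x.1 x.2).1 1) ((p x.1 x.2).2 1) c2)) := by
      intro c1 c2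
      rw [Finset.prod_div_distrib, Finset.prod_const]
      simp only [psid]
      rw [Finset.prod_sum, Finset.sum_div]
      refine Finset.sum_congr rfl fun p _ => ?_
      rw [Finset.prod_mul_distrib, Finset.prod_mul_distrib]
      ring
    simp only [hcomb]
    rw [sum_swap_factor]
    refine Finset.sum_eq_zero fun p hp => ?_
    classical
    set q : ℕ → Rect := fun s => if h : s ∈ T then p s h else default with hq
    have hqA : ∀ s ∈ T, q s ∈ Afin n s := fun s hs => by
      rw [hq]; simp only [dif_pos hs]; exact Finset.mem_pi.mp hp s hs
    have hq1 : ∀ (x : {a // a ∈ T}), p x.1 x.2 = q x.1 := fun x => by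
      rw [hq]; simp [x.2]
    have e1 : ∀ c, ∏ x ∈ T.attach, Dh (n+1) ((p x.1 x.2).1 0) ((p x.1 x.2).2 0) c
        = ∏ s ∈ T, Dh (n+1) s ((q s).2 0) c := by
      intro c
      calc ∏ x ∈ T.attach, Dh (n+1) ((p x.1 x.2).1 0) ((p x.1 x.2).2 0) c
          = ∏ x ∈ T.attach, Dh (n+1) ((q x.1).1 0) ((q x.1).2 0) c :=
            Finset.prod_congr rfl fun x _ => by rw [hq1 x]
        _ = ∏ s ∈ T, Dh (n+1) ((q s).1 0) ((q s).2 0) c :=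
              Finset.prod_attach T (fun s => Dh (n+1) ((q s).1 0) ((q s).2 0) c)
        _ = ∏ s ∈ T, Dh (n+1) s ((q s).2 0) c :=
            Finset.prod_congr rfl fun s hs => by rw [(mem_Afin' (hqA s hs)).1]
    have e2 : ∀ c, ∏ x ∈ T.attach, Dh (n+1) ((p x.1 x.2).1 1) ((p x.1 x.2).2 1) c
        = ∏ s ∈ T, Dh (n+1) (n - s) ((q s).2 1) c := by
      intro c
      calc ∏ x ∈ T.attach, Dh (n+1) ((p x.1 x.2).1 1) ((p x.1 x.2).2 1) c
          = ∏ x ∈ T.attach, Dh (n+1) ((q x.1).1 1) ((q x.1).2 1) c :=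
            Finset.prod_congr rfl fun x _ => by rw [hq1 x]
        _ = ∏ s ∈ T, Dh (n+1) ((q s).1 1) ((q s).2 1) c :=
            Finset.prod_attach T (fun s => Dh (n+1) ((q s).1 1) ((q s).2 1) c)
        _ = ∏ s ∈ T, Dh (n+1) (n - s) ((q s).2 1) c :=
            Finset.prod_congr rfl fun s hs => by rw [(mem_Afin' (hqA s hs)).2.1]
    simp only [e1, e2]
    rcases mono_zero n R hR T hT' hcase (fun s => (q s).2 0) (fun s => (q s).2 1) with h | h
    · rw [h]; ring
    · rw [h]; ring

lemma discrete_main (n : ℕ) (ε : Rect → ℝ) (R : Rect) (hR : R ∈ rectsGe 2 n) :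
    ∑ c1 ∈ range (2^(n+1)), ∑ c2 ∈ range (2^(n+1)),
      Dh (n+1) (R.1 0) (R.2 0) c1 * Dh (n+1) (R.1 1) (R.2 1) c2 * PsiD n ε c1 c2
    = if R.1 0 + R.1 1 = n then ε R * 2^(n+1) else 0 := by
  obtain ⟨hk, hj1, hj2⟩ := mem_rectsGe' hR
  have expand : ∀ c1 c2, PsiD n ε c1 c2
      = ∑ T ∈ (range (n+1)).powerset, ∏ s ∈ T, (psid n ε s c1 c2 / 2) := by
    intro c1 c2
    rw [PsiD]
    calc ∏ s ∈ range (n+1), (1 + psid n ε s c1 c2 / 2)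
        = ∏ s ∈ range (n+1), (psid n ε s c1 c2 / 2 + 1) :=
          Finset.prod_congr rfl fun s _ => add_comm _ _
      _ = ∑ T ∈ (range (n+1)).powerset, ∏ s ∈ T, (psid n ε s c1 c2 / 2) := by
          rw [Finset.prod_add]
          simp
  simp only [expand, Finset.mul_sum]
  calc ∑ c1 ∈ range (2^(n+1)), ∑ c2 ∈ range (2^(n+1)), ∑ T ∈ (range (n+1)).powerset,
        Dh (n+1) (R.1 0) (R.2 0) c1 * Dh (n+1) (R.1 1) (R.2 1) c2
          * ∏ s ∈ T, (psid n ε s c1 c2 / 2)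
      = ∑ c1 ∈ range (2^(n+1)), ∑ T ∈ (range (n+1)).powerset, ∑ c2 ∈ range (2^(n+1)),
        Dh (n+1) (R.1 0) (R.2 0) c1 * Dh (n+1) (R.1 1) (R.2 1) c2
          * ∏ s ∈ T, (psid n ε s c1 c2 / 2) :=
        Finset.sum_congr rfl fun c1 _ => Finset.sum_comm
    _ = ∑ T ∈ (range (n+1)).powerset, ∑ c1 ∈ range (2^(n+1)), ∑ c2 ∈ range (2^(n+1)),
        Dh (n+1) (R.1 0) (R.2 0) c1 * Dh (n+1) (R.1 1) (R.2 1) c2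
          * ∏ s ∈ T, (psid n ε s c1 c2 / 2) := Finset.sum_comm
    _ = ∑ T ∈ (range (n+1)).powerset,
          (if T = {R.1 0} ∧ R.1 0 + R.1 1 = n then ε R * 2^(n+1) else 0) :=
        Finset.sum_congr rfl fun T hT =>
          term_eval n ε R hR T (Finset.mem_powerset.mp hT)
    _ = if R.1 0 + R.1 1 = n then ε R * 2^(n+1) else 0 := by
        by_cases hsum : R.1 0 + R.1 1 = n
        · rw [if_pos hsum]
          have hco : ∀ T : Finset ℕ, (T = {R.1 0} ∧ R.1 0 + R.1 1 = n) ↔ (T = {R.1 0}) :=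
            fun T => by simp [hsum]
          simp only [hco]
          rw [Finset.sum_ite_eq' ((range (n+1)).powerset) ({R.1 0} : Finset ℕ)
            (fun _ => ε R * 2^(n+1))]
          rw [if_pos (Finset.mem_powerset.mpr (by
            simp only [Finset.singleton_subset_iff, Finset.mem_range]; omega))]
        · simp [hsum]

lemma discrete_base (n : ℕ) (ε : Rect → ℝ) :
    ∑ c1 ∈ range (2^(n+1)), ∑ c2 ∈ range (2^(n+1)), PsiD n ε c1 c2
    = (2^(n+1) : ℝ) * 2^(n+1) := by
  have expand : ∀ c1 c2, PsiD n ε c1 c2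
      = ∑ T ∈ (range (n+1)).powerset, ∏ s ∈ T, (psid n ε s c1 c2 / 2) := by
    intro c1 c2
    rw [PsiD]
    calc ∏ s ∈ range (n+1), (1 + psid n ε s c1 c2 / 2)
        = ∏ s ∈ range (n+1), (psid n ε s c1 c2 / 2 + 1) :=
          Finset.prod_congr rfl fun s _ => add_comm _ _
      _ = ∑ T ∈ (range (n+1)).powerset, ∏ s ∈ T, (psid n ε s c1 c2 / 2) := by
          rw [Finset.prod_add]
          simp
  simp only [expand]
  calc ∑ c1 ∈ range (2^(n+1)), ∑ c2 ∈ range (2^(n+1)), ∑ T ∈ (range (n+1)).powerset,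
        ∏ s ∈ T, (psid n ε s c1 c2 / 2)
      = ∑ c1 ∈ range (2^(n+1)), ∑ T ∈ (range (n+1)).powerset, ∑ c2 ∈ range (2^(n+1)),
        ∏ s ∈ T, (psid n ε s c1 c2 / 2) :=
        Finset.sum_congr rfl fun c1 _ => Finset.sum_comm
    _ = ∑ T ∈ (range (n+1)).powerset, ∑ c1 ∈ range (2^(n+1)), ∑ c2 ∈ range (2^(n+1)),
        ∏ s ∈ T, (psid n ε s c1 c2 / 2) := Finset.sum_comm
    _ = ∑ T ∈ (range (n+1)).powerset,
          (if T = (∅ : Finset ℕ) then (2^(n+1) : ℝ) * 2^(n+1) else 0) := by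
        refine Finset.sum_congr rfl fun T hT => ?_
        have hT' : ∀ s ∈ T, s < n + 1 := fun s hs =>
          Finset.mem_range.mp (Finset.mem_powerset.mp hT hs)
        by_cases hTe : T = ∅
        · rw [hTe, if_pos rfl]
          simp only [Finset.prod_empty, Finset.sum_const, Finset.card_range, nsmul_eq_mul,
            mul_one]
          push_cast
          ring
        · rw [if_neg hTe]
          have hcomb : ∀ c1 c2, ∏ s ∈ T, (psid n ε s c1 c2 / 2)
              = ∑ p ∈ T.pi (fun s => Afin n s),
                  ((∏ x ∈ T.attach, ε (p x.1 x.2))/2^T.card)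
                    * ((∏ x ∈ T.attach, Dh (n+1) ((p x.1 x.2).1 0) ((p x.1 x.2).2 0) c1)
                       * (∏ x ∈ T.attach, Dh (n+1) ((p x.1 x.2).1 1) ((p x.1 x.2).2 1) c2)) := by
            intro c1 c2
            rw [Finset.prod_div_distrib, Finset.prod_const]
            simp only [psid]
            rw [Finset.prod_sum, Finset.sum_div]
            refine Finset.sum_congr rfl fun p _ => ?_
            rw [Finset.prod_mul_distrib, Finset.prod_mul_distrib]
            ring
          simp only [hcomb]
          rw [sum_swap_factor']
          refine Finset.sum_eq_zero fun p hp => ?_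
          classical
          set q : ℕ → Rect := fun s => if h : s ∈ T then p s h else default with hq
          have hqA : ∀ s ∈ T, q s ∈ Afin n s := fun s hs => by
            rw [hq]; simp only [dif_pos hs]; exact Finset.mem_pi.mp hp s hs
          have hq1 : ∀ (x : {a // a ∈ T}), p x.1 x.2 = q x.1 := fun x => by
            rw [hq]; simp [x.2]
          have e1 : ∀ c, ∏ x ∈ T.attach, Dh (n+1) ((p x.1 x.2).1 0) ((p x.1 x.2).2 0) c
              = ∏ s ∈ T, Dh (n+1) s ((q s).2 0) c := by
            intro c
            calc ∏ x ∈ T.attach, Dh (n+1) ((p x.1 x.2).1 0) ((p x.1 x.2).2 0) c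
                = ∏ x ∈ T.attach, Dh (n+1) ((q x.1).1 0) ((q x.1).2 0) c :=
                  Finset.prod_congr rfl fun x _ => by rw [hq1 x]
              _ = ∏ s ∈ T, Dh (n+1) ((q s).1 0) ((q s).2 0) c :=
              Finset.prod_attach T (fun s => Dh (n+1) ((q s).1 0) ((q s).2 0) c)
              _ = ∏ s ∈ T, Dh (n+1) s ((q s).2 0) c :=
                  Finset.prod_congr rfl fun s hs => by rw [(mem_Afin' (hqA s hs)).1]
          simp only [e1]
          have hz : (∑ c1 ∈ range (2^(n+1)), ∏ s ∈ T, Dh (n+1) s ((q s).2 0) c1) = 0 := by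
            refine prod_Dh_zero' T (Finset.nonempty_of_ne_empty hTe) (fun s => s)
              (fun s => (q s).2 0) ?_ ?_
            · intro i _ i' _ h
              exact h
            · intro i hi
              exact hT' i hi
          rw [hz]
          ring
    _ = (2^(n+1) : ℝ) * 2^(n+1) := by
        rw [Finset.sum_ite_eq' ((range (n+1)).powerset) (∅ : Finset ℕ)]
        rw [if_pos (Finset.mem_powerset.mpr (Finset.empty_subset _))]


lemma haar1_abs (k j : ℕ) (x : ℝ) : |haar1 k j x| ≤ 1 := by
  unfold haar1; split_ifs <;> norm_num

lemma haar1_supp {k j : ℕ} {x : ℝ} (h : haar1 k j x ≠ 0) :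
    (j:ℝ)/2^k ≤ x ∧ x < ((j:ℝ)+1)/2^k := by
  unfold haar1 at h
  split_ifs at h with h1 h2
  · refine ⟨h1.1, lt_of_lt_of_le h1.2 ?_⟩
    gcongr
    linarith
  · refine ⟨le_trans ?_ h2.1, h2.2⟩
    gcongr
    linarith
  · exact absurd rfl h

lemma haar1_pos_uniq {k j j' : ℕ} {y : ℝ} (h : haar1 k j y ≠ 0) (h' : haar1 k j' y ≠ 0) :
    j = j' := by
  obtain ⟨a1, b1⟩ := haar1_supp h
  obtain ⟨a2, b2⟩ := haar1_supp h'
  have hp : (0:ℝ) < 2^k := by positivity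
  have e1 : (j:ℝ) < (j':ℝ)+1 := by
    have := lt_of_le_of_lt a1 b2
    rwa [div_lt_div_iff_of_pos_right hp] at this
  have e2 : (j':ℝ) < (j:ℝ)+1 := by
    have := lt_of_le_of_lt a2 b1
    rwa [div_lt_div_iff_of_pos_right hp] at this
  have f1 : j < j'+1 := by exact_mod_cast e1
  have f2 : j' < j+1 := by exact_mod_cast e2
  omega

lemma psi_bound (n : ℕ) (ε : Rect → ℝ) (hε : ∀ R ∈ rectsEq 2 n, ε R = 1 ∨ ε R = -1)
    (s : ℕ) (x : Fin 2 → ℝ) :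
    |∑ R ∈ Afin n s, ε R * haarR R x| ≤ 1 := by
  by_cases hz : ∀ R ∈ Afin n s, ε R * haarR R x = 0
  · rw [Finset.sum_eq_zero hz]; norm_num
  · push_neg at hz
    obtain ⟨R0, hR0, hR0ne⟩ := hz
    rw [Finset.sum_eq_single_of_mem R0 hR0 ?uniq]
    case uniq =>
      intro R hR hne
      by_contra hne0
      have hhR : haarR R x ≠ 0 := fun h => hne0 (by rw [h]; ring)
      have hhR0 : haarR R0 x ≠ 0 := fun h => hR0ne (by rw [h]; ring)
      rw [haarR, Fin.prod_univ_two] at hhR hhR0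
      obtain ⟨g1, g2⟩ := mul_ne_zero_iff.mp hhR
      obtain ⟨g1', g2'⟩ := mul_ne_zero_iff.mp hhR0
      obtain ⟨l0, l1, -, -, -⟩ := mem_Afin' hR
      obtain ⟨l0', l1', -, -, -⟩ := mem_Afin' hR0
      rw [l0] at g1
      rw [l1] at g2
      rw [l0'] at g1'
      rw [l1'] at g2'
      exact hne (rect_ext (by rw [l0, l0']) (by rw [l1, l1'])
        (haar1_pos_uniq g1 g1') (haar1_pos_uniq g2 g2'))
    have hmemEq : R0 ∈ rectsEq 2 n := Finset.mem_of_mem_filter R0 hR0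
    have hεR : |ε R0| = 1 := by
      rcases hε R0 hmemEq with h | h <;> rw [h] <;> norm_num
    have hhaar : |haarR R0 x| ≤ 1 := by
      rw [haarR, Fin.prod_univ_two, abs_mul]
      exact mul_le_one₀ (haar1_abs _ _ _) (abs_nonneg _) (haar1_abs _ _ _)
    calc |ε R0 * haarR R0 x| = |ε R0| * |haarR R0 x| := abs_mul _ _
      _ = |haarR R0 x| := by rw [hεR, one_mul]
      _ ≤ 1 := hhaar

lemma haarR_cell {n : ℕ} (R : Rect) (h0 : R.1 0 < n+1) (h1 : R.1 1 < n+1) {c1 c2 : ℕ}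
    {x : Fin 2 → ℝ} (hx : x ∈ cellSet (n+1) c1 c2) :
    haarR R x = Dh (n+1) (R.1 0) (R.2 0) c1 * Dh (n+1) (R.1 1) (R.2 1) c2 := by
  rw [mem_cellSet] at hx
  rw [haarR, Fin.prod_univ_two]
  rw [haar1_cell h0 _ _ hx.1.1 hx.1.2, haar1_cell h1 _ _ hx.2.1 hx.2.2]


lemma filter_rectsGe_eq (n : ℕ) :
    (rectsGe 2 n).filter (fun R => R.1 0 + R.1 1 = n) = rectsEq 2 n := by
  ext R
  simp only [Finset.mem_filter, rectsGe, rectsEq, Fin.sum_univ_two]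
  constructor
  · rintro ⟨⟨hp, hle, hpos⟩, hsum⟩
    exact ⟨hp, hsum, hpos⟩
  · rintro ⟨hp, hsum, hpos⟩
    exact ⟨⟨hp, le_of_eq hsum, hpos⟩, hsum⟩

end RieszAux

open RieszAux Finset in
/-- **Temlyakov's Riesz product (proof of Talagrand's theorem in dimension 2).**
The Riesz product `Ψ = ∏_{s=0}^n (1 + ψ_s/2)`, built from the signs `ε`, is nonnegative,
has integral one, and computes the inner product with the hyperbolic Haar sum. -/
theorem riesz_product_two_dim (n : ℕ) (hn : 1 ≤ n)
    (ε : ((Fin 2 → ℕ) × (Fin 2 → ℕ)) → ℝ)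
    (hε : ∀ R ∈ rectsEq 2 n, ε R = 1 ∨ ε R = -1)
    (Ψ : (Fin 2 → ℝ) → ℝ)
    (hΨ : ∀ x, Ψ x = ∏ s ∈ Finset.range (n + 1),
      (1 + (∑ R ∈ (rectsEq 2 n).filter (fun R => R.1 0 = s ∧ R.1 1 = n - s),
        ε R * haarR R x) / 2)) :
    (∀ x ∈ unitCube 2, 0 ≤ Ψ x) ∧
    (∫ x in unitCube 2, Ψ x) = 1 ∧
    (∀ α : ((Fin 2 → ℕ) × (Fin 2 → ℕ)) → ℝ,
      (∫ x in unitCube 2, (∑ R ∈ rectsGe 2 n, α R * haarR R x) * Ψ x) =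
        (2 : ℝ) ^ (-(n : ℝ) - 1) * ∑ R ∈ rectsEq 2 n, ε R * α R) := by
  have hcell : ∀ c1 c2, c1 < 2^(n+1) → c2 < 2^(n+1) → ∀ x ∈ RieszAux.cellSet (n+1) c1 c2,
      Ψ x = RieszAux.PsiD n ε c1 c2 := by
    intro c1 c2 h1 h2 x hx
    rw [hΨ x]
    unfold RieszAux.PsiD RieszAux.psid RieszAux.Afin
    refine Finset.prod_congr rfl fun s hs => ?_
    have hsn : s < n + 1 := Finset.mem_range.mp hs
    congr 1
    congr 1
    refine Finset.sum_congr rfl fun R hR => ?_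
    obtain ⟨l0, l1, -, -, -⟩ := RieszAux.mem_Afin' (show R ∈ RieszAux.Afin n s from hR)
    rw [RieszAux.haarR_cell R (by omega) (by omega) hx]
  refine ⟨?_, ?_, ?_⟩
  · -- nonnegativity
    intro x _
    rw [hΨ x]
    refine Finset.prod_nonneg fun s _ => ?_
    have h1 : (-1:ℝ) ≤ ∑ R ∈ (rectsEq 2 n).filter (fun R => R.1 0 = s ∧ R.1 1 = n - s),
        ε R * haarR R x := (abs_le.mp (RieszAux.psi_bound n ε hε s x)).1
    linarith
  · -- integral one
    rw [RieszAux.integral_cube_eq_sum (n+1) Ψ (fun c1 c2 => RieszAux.PsiD n ε c1 c2) hcell,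
      RieszAux.discrete_base]
    have h2 : ((2:ℝ)^(n+1)) ≠ 0 := by positivity
    field_simp
  · -- inner products
    intro α
    have hconst : ∀ c1 c2, c1 < 2^(n+1) → c2 < 2^(n+1) → ∀ x ∈ RieszAux.cellSet (n+1) c1 c2,
        (∑ R ∈ rectsGe 2 n, α R * haarR R x) * Ψ x
        = (∑ R ∈ rectsGe 2 n, α R * (RieszAux.Dh (n+1) (R.1 0) (R.2 0) c1
            * RieszAux.Dh (n+1) (R.1 1) (R.2 1) c2)) * RieszAux.PsiD n ε c1 c2 := by
      intro c1 c2 h1 h2 x hx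
      rw [hcell c1 c2 h1 h2 x hx]
      congr 1
      refine Finset.sum_congr rfl fun R hR => ?_
      obtain ⟨hk, -, -⟩ := RieszAux.mem_rectsGe' hR
      rw [RieszAux.haarR_cell R (by omega) (by omega) hx]
    rw [RieszAux.integral_cube_eq_sum (n+1)
      (fun x => (∑ R ∈ rectsGe 2 n, α R * haarR R x) * Ψ x)
      (fun c1 c2 => (∑ R ∈ rectsGe 2 n, α R * (RieszAux.Dh (n+1) (R.1 0) (R.2 0) c1
        * RieszAux.Dh (n+1) (R.1 1) (R.2 1) c2)) * RieszAux.PsiD n ε c1 c2)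
      hconst]
    have hswap : ∑ c1 ∈ Finset.range (2^(n+1)), ∑ c2 ∈ Finset.range (2^(n+1)),
        (∑ R ∈ rectsGe 2 n, α R * (RieszAux.Dh (n+1) (R.1 0) (R.2 0) c1
          * RieszAux.Dh (n+1) (R.1 1) (R.2 1) c2)) * RieszAux.PsiD n ε c1 c2
        = ∑ R ∈ rectsGe 2 n, α R * (∑ c1 ∈ Finset.range (2^(n+1)),
            ∑ c2 ∈ Finset.range (2^(n+1)),
            RieszAux.Dh (n+1) (R.1 0) (R.2 0) c1 * RieszAux.Dh (n+1) (R.1 1) (R.2 1) c2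
              * RieszAux.PsiD n ε c1 c2) := by
      calc ∑ c1 ∈ Finset.range (2^(n+1)), ∑ c2 ∈ Finset.range (2^(n+1)),
            (∑ R ∈ rectsGe 2 n, α R * (RieszAux.Dh (n+1) (R.1 0) (R.2 0) c1
              * RieszAux.Dh (n+1) (R.1 1) (R.2 1) c2)) * RieszAux.PsiD n ε c1 c2
          = ∑ c1 ∈ Finset.range (2^(n+1)), ∑ c2 ∈ Finset.range (2^(n+1)),
            ∑ R ∈ rectsGe 2 n, α R * (RieszAux.Dh (n+1) (R.1 0) (R.2 0) c1
              * RieszAux.Dh (n+1) (R.1 1) (R.2 1) c2 * RieszAux.PsiD n ε c1 c2) := by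
            refine Finset.sum_congr rfl fun c1 _ => Finset.sum_congr rfl fun c2 _ => ?_
            rw [Finset.sum_mul]
            exact Finset.sum_congr rfl fun R _ => by ring
        _ = ∑ c1 ∈ Finset.range (2^(n+1)), ∑ R ∈ rectsGe 2 n,
              ∑ c2 ∈ Finset.range (2^(n+1)), α R * (RieszAux.Dh (n+1) (R.1 0) (R.2 0) c1
              * RieszAux.Dh (n+1) (R.1 1) (R.2 1) c2 * RieszAux.PsiD n ε c1 c2) :=
            Finset.sum_congr rfl fun c1 _ => Finset.sum_comm
        _ = ∑ R ∈ rectsGe 2 n, ∑ c1 ∈ Finset.range (2^(n+1)),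
              ∑ c2 ∈ Finset.range (2^(n+1)), α R * (RieszAux.Dh (n+1) (R.1 0) (R.2 0) c1
              * RieszAux.Dh (n+1) (R.1 1) (R.2 1) c2 * RieszAux.PsiD n ε c1 c2) :=
            Finset.sum_comm
        _ = ∑ R ∈ rectsGe 2 n, α R * (∑ c1 ∈ Finset.range (2^(n+1)),
              ∑ c2 ∈ Finset.range (2^(n+1)),
              RieszAux.Dh (n+1) (R.1 0) (R.2 0) c1 * RieszAux.Dh (n+1) (R.1 1) (R.2 1) c2
                * RieszAux.PsiD n ε c1 c2) := by
            refine Finset.sum_congr rfl fun R _ => ?_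
            simp only [← Finset.mul_sum]
    rw [hswap]
    have hval : ∀ R ∈ rectsGe 2 n, α R * (∑ c1 ∈ Finset.range (2^(n+1)),
        ∑ c2 ∈ Finset.range (2^(n+1)),
        RieszAux.Dh (n+1) (R.1 0) (R.2 0) c1 * RieszAux.Dh (n+1) (R.1 1) (R.2 1) c2
          * RieszAux.PsiD n ε c1 c2)
        = if R.1 0 + R.1 1 = n then α R * (ε R * 2^(n+1)) else 0 := by
      intro R hR
      rw [RieszAux.discrete_main n ε R hR, mul_ite, mul_zero]
    rw [Finset.sum_congr rfl hval, ← Finset.sum_filter, RieszAux.filter_rectsGe_eq n]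
    have h2 : ((2:ℝ)^(n+1)) ≠ 0 := by positivity
    have hrpow : (2:ℝ) ^ (-(n:ℝ) - 1) = ((2:ℝ)^(n+1))⁻¹ := by
      rw [show -(n:ℝ)-1 = -(((n+1 : ℕ) : ℝ)) by push_cast; ring]
      rw [Real.rpow_neg (by norm_num), Real.rpow_natCast]
    rw [hrpow, Finset.mul_sum, Finset.mul_sum]
    refine Finset.sum_congr rfl fun R hR => ?_
    field_simp
end
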